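/- arXiv:1509.05306 — 7 statements merged into one kernel-verified Lean document; each statement's English description precedes it below -/
import Mathlib

section
/- Let 0 < a ≤ b be real numbers and let A and B be Hermitian k×k complex matrices with a·I ≤ A ≤ b·I and a·I ≤ B ≤ b·I (so A and B are positive definite and invertible). Then A ⊗ B⁻¹ + A⁻¹ ⊗ B ≤ ((a² + b²)/(a·b))·I, where I on the right-hand side denotes the k²×k² identity matrix. -/
open Matrix MeasureTheory
open scoped Kronecker ComplexOrder

attribute [local instance] Matrix.frobeniusNormedAddCommGroup Matrix.frobeniusNormedSpace

/-- Symmetrized Kronecker tensor product: `X ⊗ₛ Y = (1/2)(X ⊗ Y + Y ⊗ X)`. -/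
noncomputable def symKron {k : ℕ} (X Y : Matrix (Fin k) (Fin k) ℂ) :
    Matrix (Fin k × Fin k) (Fin k × Fin k) ℂ :=
  ((1 : ℂ) / 2) • (X ⊗ₖ Y + Y ⊗ₖ X)

lemma aux_eig_lb {k : ℕ} {c : ℝ} {A : Matrix (Fin k) (Fin k) ℂ} (hA : A.IsHermitian)
    (h : (A - c • 1).PosSemidef) (i : Fin k) : c ≤ hA.eigenvalues i := by
  have hv := hA.mulVec_eigenvectorBasis i
  have hnorm : star (⇑(hA.eigenvectorBasis i)) ⬝ᵥ (⇑(hA.eigenvectorBasis i)) = 1 := by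
    have h2 := EuclideanSpace.inner_eq_star_dotProduct (𝕜 := ℂ) (hA.eigenvectorBasis i)
      (hA.eigenvectorBasis i)
    rw [inner_self_eq_norm_sq_to_K, hA.eigenvectorBasis.orthonormal.1 i] at h2
    rw [dotProduct_comm]
    simpa using h2.symm
  have h0 := h.re_dotProduct_nonneg (⇑(hA.eigenvectorBasis i))
  rw [sub_mulVec, hv, smul_mulVec, one_mulVec, dotProduct_sub, dotProduct_smul,
    dotProduct_smul, hnorm] at h0
  simp [Complex.real_smul] at h0
  linarith

lemma aux_eig_ub {k : ℕ} {c : ℝ} {A : Matrix (Fin k) (Fin k) ℂ} (hA : A.IsHermitian)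
    (h : ((c • 1 : Matrix (Fin k) (Fin k) ℂ) - A).PosSemidef) (i : Fin k) :
    hA.eigenvalues i ≤ c := by
  have hv := hA.mulVec_eigenvectorBasis i
  have hnorm : star (⇑(hA.eigenvectorBasis i)) ⬝ᵥ (⇑(hA.eigenvectorBasis i)) = 1 := by
    have h2 := EuclideanSpace.inner_eq_star_dotProduct (𝕜 := ℂ) (hA.eigenvectorBasis i)
      (hA.eigenvectorBasis i)
    rw [inner_self_eq_norm_sq_to_K, hA.eigenvectorBasis.orthonormal.1 i] at h2
    rw [dotProduct_comm]
    simpa using h2.symm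
  have h0 := h.re_dotProduct_nonneg (⇑(hA.eigenvectorBasis i))
  rw [sub_mulVec, hv, smul_mulVec, one_mulVec, dotProduct_sub, dotProduct_smul,
    dotProduct_smul, hnorm] at h0
  simp [Complex.real_smul] at h0
  linarith

lemma aux_coe : (RCLike.ofReal : ℝ → ℂ) = Complex.ofReal := rfl

lemma aux_star_kron {k : ℕ} (X Y : Matrix (Fin k) (Fin k) ℂ) :
    star (X ⊗ₖ Y) = star X ⊗ₖ star Y := by
  ext ⟨i, j⟩ ⟨p, q⟩
  simp [Matrix.star_eq_conjTranspose, conjTranspose_apply, star_mul']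

lemma aux_spectral_inv {k : ℕ} (A : Matrix (Fin k) (Fin k) ℂ) (hA : A.IsHermitian)
    (hl : ∀ i, hA.eigenvalues i ≠ 0) :
    A⁻¹ = (hA.eigenvectorUnitary : Matrix (Fin k) (Fin k) ℂ) *
      diagonal (fun i => ((hA.eigenvalues i : ℂ))⁻¹) *
      star (hA.eigenvectorUnitary : Matrix (Fin k) (Fin k) ℂ) := by
  set U : Matrix (Fin k) (Fin k) ℂ := (hA.eigenvectorUnitary : Matrix (Fin k) (Fin k) ℂ) with hU
  have hUU : U * star U = 1 := Matrix.mem_unitaryGroup_iff.mp hA.eigenvectorUnitary.2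
  have hsUU : star U * U = 1 := Matrix.mem_unitaryGroup_iff'.mp hA.eigenvectorUnitary.2
  apply inv_eq_right_inv
  have key : (U * diagonal (RCLike.ofReal ∘ hA.eigenvalues) * star U) *
      (U * diagonal (fun i => ((hA.eigenvalues i : ℂ))⁻¹) * star U) = 1 := by
    simp only [Matrix.mul_assoc]
    rw [← Matrix.mul_assoc (star U) U, hsUU, one_mul,
      ← Matrix.mul_assoc (diagonal _) (diagonal _), diagonal_mul_diagonal]
    have : (fun i => (RCLike.ofReal ∘ hA.eigenvalues) i * ((hA.eigenvalues i : ℂ))⁻¹)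
        = fun _ => 1 := by
      funext i
      simp only [Function.comp_apply]
      exact mul_inv_cancel₀ (by simpa using hl i)
    rw [this, diagonal_one, one_mul, hUU]
  calc A * (U * diagonal (fun i => ((hA.eigenvalues i : ℂ))⁻¹) * star U)
      = (U * diagonal (RCLike.ofReal ∘ hA.eigenvalues) * star U) *
        (U * diagonal (fun i => ((hA.eigenvalues i : ℂ))⁻¹) * star U) := by
        exact congrArg (· * (U * diagonal (fun i => ((hA.eigenvalues i : ℂ))⁻¹) * star U)) hA.spectral_theorem
    _ = 1 := key

lemma aux_scalar {a b lam mu : ℝ} (ha : 0 < a) (hab : a ≤ b)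
    (h1 : a ≤ lam) (h2 : lam ≤ b) (h3 : a ≤ mu) (h4 : mu ≤ b) :
    0 ≤ (a ^ 2 + b ^ 2) / (a * b) - (lam * mu⁻¹ + lam⁻¹ * mu) := by
  have hb : 0 < b := lt_of_lt_of_le ha hab
  have hlam : 0 < lam := lt_of_lt_of_le ha h1
  have hmu : 0 < mu := lt_of_lt_of_le ha h3
  have key : (lam ^ 2 + mu ^ 2) * (a * b) ≤ (a ^ 2 + b ^ 2) * (lam * mu) := by
    have f1 : 0 ≤ b * mu - a * lam := by nlinarith
    have f2 : 0 ≤ b * lam - a * mu := by nlinarith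
    nlinarith [mul_nonneg f1 f2]
  have e1 : lam * mu⁻¹ + lam⁻¹ * mu = (lam ^ 2 + mu ^ 2) / (lam * mu) := by
    field_simp
  rw [e1, sub_nonneg, div_le_div_iff₀ (by positivity) (by positivity)]
  linarith

/-- Lemma 3.1 (inequality part): if `A, B` are Hermitian with `a·I ≤ A, B ≤ b·I` where
`0 < a ≤ b`, then `A ⊗ B⁻¹ + A⁻¹ ⊗ B ≤ ((a² + b²)/(ab))·I`. -/
theorem kron_kantorovich_bound {k : ℕ} (a b : ℝ) (ha : 0 < a) (hab : a ≤ b)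
    (A B : Matrix (Fin k) (Fin k) ℂ) (hA : A.IsHermitian) (hB : B.IsHermitian)
    (hAa : (A - a • 1).PosSemidef) (hAb : ((b • 1 : Matrix (Fin k) (Fin k) ℂ) - A).PosSemidef)
    (hBa : (B - a • 1).PosSemidef) (hBb : ((b • 1 : Matrix (Fin k) (Fin k) ℂ) - B).PosSemidef) :
    (((a ^ 2 + b ^ 2) / (a * b)) • (1 : Matrix (Fin k × Fin k) (Fin k × Fin k) ℂ)
      - (A ⊗ₖ B⁻¹ + A⁻¹ ⊗ₖ B)).PosSemidef := by
  classical
  set c : ℝ := (a ^ 2 + b ^ 2) / (a * b) with hc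
  set U : Matrix (Fin k) (Fin k) ℂ := (hA.eigenvectorUnitary : Matrix (Fin k) (Fin k) ℂ) with hceU
  set V : Matrix (Fin k) (Fin k) ℂ := (hB.eigenvectorUnitary : Matrix (Fin k) (Fin k) ℂ) with hceV
  set lam := hA.eigenvalues with hlam
  set mu := hB.eigenvalues with hmu
  have hla : ∀ i, a ≤ lam i := fun i => aux_eig_lb hA hAa i
  have hlb : ∀ i, lam i ≤ b := fun i => aux_eig_ub hA hAb i
  have hma : ∀ i, a ≤ mu i := fun i => aux_eig_lb hB hBa i
  have hmb : ∀ i, mu i ≤ b := fun i => aux_eig_ub hB hBb i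
  have hlpos : ∀ i, (0:ℝ) < lam i := fun i => lt_of_lt_of_le ha (hla i)
  have hmpos : ∀ i, (0:ℝ) < mu i := fun i => lt_of_lt_of_le ha (hma i)
  have hUU : U * star U = 1 := Matrix.mem_unitaryGroup_iff.mp hA.eigenvectorUnitary.2
  have hVV : V * star V = 1 := Matrix.mem_unitaryGroup_iff.mp hB.eigenvectorUnitary.2
  set D1 : Matrix (Fin k) (Fin k) ℂ := diagonal (RCLike.ofReal ∘ lam) with hD1
  set D2 : Matrix (Fin k) (Fin k) ℂ := diagonal (fun i => ((lam i : ℂ))⁻¹) with hD2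
  set E1 : Matrix (Fin k) (Fin k) ℂ := diagonal (RCLike.ofReal ∘ mu) with hE1
  set E2 : Matrix (Fin k) (Fin k) ℂ := diagonal (fun i => ((mu i : ℂ))⁻¹) with hE2
  set W : Matrix (Fin k × Fin k) (Fin k × Fin k) ℂ := U ⊗ₖ V with hWdef
  have hWW : W * star W = 1 := by
    rw [hWdef, aux_star_kron, ← mul_kronecker_mul, hUU, hVV, one_kronecker_one]
  have hAspec : A = U * D1 * star U := hA.spectral_theorem
  have hBspec : B = V * E1 * star V := hB.spectral_theorem
  have hAinv : A⁻¹ = U * D2 * star U := aux_spectral_inv A hA (fun i => (hlpos i).ne')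
  have hBinv : B⁻¹ = V * E2 * star V := aux_spectral_inv B hB (fun i => (hmpos i).ne')
  have h1 : A ⊗ₖ B⁻¹ = W * (D1 ⊗ₖ E2) * star W := by
    conv_lhs => rw [hAspec, hBinv]
    rw [mul_kronecker_mul, mul_kronecker_mul, ← aux_star_kron, ← hWdef]
  have h2 : A⁻¹ ⊗ₖ B = W * (D2 ⊗ₖ E1) * star W := by
    conv_lhs => rw [hAinv, hBspec]
    rw [mul_kronecker_mul, mul_kronecker_mul, ← aux_star_kron, ← hWdef]
  set d : Fin k × Fin k → ℝ := fun p => c - (lam p.1 * (mu p.2)⁻¹ + (lam p.1)⁻¹ * mu p.2)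
    with hd
  have hdnn : ∀ p, (0:ℂ) ≤ ((d p : ℝ) : ℂ) := by
    intro p
    rw [Complex.zero_le_real, hd]
    exact aux_scalar ha hab (hla p.1) (hlb p.1) (hma p.2) (hmb p.2)
  have hinner : c • (1 : Matrix (Fin k × Fin k) (Fin k × Fin k) ℂ)
      - (D1 ⊗ₖ E2 + D2 ⊗ₖ E1) = diagonal (fun p => ((d p : ℝ) : ℂ)) := by
    rw [hD1, hD2, hE1, hE2, diagonal_kronecker_diagonal, diagonal_kronecker_diagonal,
      diagonal_add, ← Matrix.diagonal_one, ← diagonal_smul, diagonal_sub]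
    refine congrArg diagonal ?_
    funext p
    simp only [Pi.add_apply, Pi.smul_apply, Pi.sub_apply, hd, Function.comp_apply,
      Complex.real_smul, aux_coe]
    push_cast
    ring
  have key : c • (1 : Matrix (Fin k × Fin k) (Fin k × Fin k) ℂ) - (A ⊗ₖ B⁻¹ + A⁻¹ ⊗ₖ B)
      = W * diagonal (fun p => ((d p : ℝ) : ℂ)) * star W := by
    rw [h1, h2, ← hinner]
    have hone : c • (1 : Matrix (Fin k × Fin k) (Fin k × Fin k) ℂ)
        = W * (c • (1 : Matrix (Fin k × Fin k) (Fin k × Fin k) ℂ)) * star W := by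
      rw [Matrix.mul_smul, Matrix.smul_mul, mul_one, hWW]
    conv_lhs => rw [hone]
    rw [Matrix.mul_sub, Matrix.sub_mul, Matrix.mul_add, Matrix.add_mul]
  rw [key, Matrix.star_eq_conjTranspose]
  exact (Matrix.PosSemidef.diagonal hdnn).mul_mul_conjTranspose_same W
end

section
/- Let 0 < a ≤ b be real numbers. For each i = 1, 2, …, n, let A_i be a Hermitian k×k complex matrix with a·I ≤ A_i ≤ b·I and let W_i be a positive semidefinite k×k complex matrix. Then (∑_{i=1}^n W_i^{1/2} A_i W_i^{1/2}) ⊗_s (∑_{i=1}^n W_i^{1/2} A_i⁻¹ W_i^{1/2}) ≤ ((a² + b²)/(2ab)) · (∑_{i=1}^n W_i)^{⊗2}. -/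
open Matrix MeasureTheory
open scoped Kronecker ComplexOrder

attribute [local instance] Matrix.frobeniusNormedAddCommGroup Matrix.frobeniusNormedSpace

/-- The positive semidefinite square root, as `Matrix.PosSemidef.sqrt` was defined in older Mathlib. -/
noncomputable def Matrix.PosSemidef.sqrt {n 𝕜 : Type*} [Fintype n] [DecidableEq n] [RCLike 𝕜]
    {A : Matrix n n 𝕜} (hA : A.PosSemidef) : Matrix n n 𝕜 :=
  (hA.1.eigenvectorUnitary : Matrix n n 𝕜) *
    diagonal (fun i => ((Real.sqrt (hA.1.eigenvalues i) : ℝ) : 𝕜)) *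
    (star hA.1.eigenvectorUnitary : Matrix n n 𝕜)

theorem Matrix.PosSemidef.posSemidef_sqrt {n 𝕜 : Type*} [Fintype n] [DecidableEq n] [RCLike 𝕜]
    {A : Matrix n n 𝕜} (hA : A.PosSemidef) : hA.sqrt.PosSemidef := by
  unfold Matrix.PosSemidef.sqrt
  have hd : (diagonal (fun i => ((Real.sqrt (hA.1.eigenvalues i) : ℝ) : 𝕜))).PosSemidef :=
    Matrix.PosSemidef.diagonal (fun i => RCLike.ofReal_nonneg.mpr (Real.sqrt_nonneg _))
  have := hd.mul_mul_conjTranspose_same (hA.1.eigenvectorUnitary : Matrix n n 𝕜)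
  rwa [← Matrix.star_eq_conjTranspose] at this

theorem Matrix.PosSemidef.sqrt_mul_self {n 𝕜 : Type*} [Fintype n] [DecidableEq n] [RCLike 𝕜]
    {A : Matrix n n 𝕜} (hA : A.PosSemidef) : hA.sqrt * hA.sqrt = A := by
  unfold Matrix.PosSemidef.sqrt
  have hU2 : (star hA.1.eigenvectorUnitary : Matrix n n 𝕜) * hA.1.eigenvectorUnitary = 1 :=
    Unitary.coe_star_mul_self _
  conv_rhs => rw [hA.1.spectral_theorem, Unitary.conjStarAlgAut_apply]
  simp only [Matrix.mul_assoc]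
  rw [← Matrix.mul_assoc (star (hA.1.eigenvectorUnitary : Matrix n n 𝕜)), hU2, Matrix.one_mul,
    ← Matrix.mul_assoc (diagonal _), diagonal_mul_diagonal]
  refine congrArg (fun X => _ * (X * _)) (congrArg diagonal (funext fun i => ?_))
  simp only [Function.comp_apply]
  rw [← RCLike.ofReal_mul, Real.mul_self_sqrt (hA.eigenvalues_nonneg i)]

namespace KantAux

variable {m m' : Type*} [Fintype m] [DecidableEq m] [Fintype m'] [DecidableEq m']

set_option linter.unusedSectionVars false

lemma real_smul_eq (r : ℝ) (M : Matrix m m' ℂ) : r • M = (r : ℂ) • M := by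
  ext i j
  simp [Matrix.smul_apply, Complex.real_smul]

lemma psd_smul {M : Matrix m m ℂ} (hM : M.PosSemidef) {r : ℝ} (hr : 0 ≤ r) :
    ((r : ℂ) • M).PosSemidef := by
  constructor
  · rw [Matrix.IsHermitian, Matrix.conjTranspose_smul, hM.1]
    simp [Complex.conj_ofReal]
  · exact (hM.smul (by exact_mod_cast hr : (0:ℂ) ≤ (r:ℂ))).2

lemma eig_ge {C : Matrix m m ℂ} (hC : C.IsHermitian) {r : ℝ}
    (h : (C - (r : ℂ) • 1).PosSemidef) (i : m) : r ≤ hC.eigenvalues i := by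
  have hv := h.re_dotProduct_nonneg (⇑(hC.eigenvectorBasis i))
  have hvv : dotProduct (star (⇑(hC.eigenvectorBasis i))) (⇑(hC.eigenvectorBasis i))
      = (1 : ℂ) := by
    have h1 : (inner ℂ (hC.eigenvectorBasis i) (hC.eigenvectorBasis i) : ℂ) = 1 := by
      rw [inner_self_eq_norm_sq_to_K]
      simp [hC.eigenvectorBasis.orthonormal.1 i]
    rw [dotProduct_comm]; exact h1
  rw [Matrix.sub_mulVec, Matrix.smul_mulVec, Matrix.one_mulVec, dotProduct_sub,
    hC.mulVec_eigenvectorBasis, dotProduct_smul, dotProduct_smul, hvv] at hv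
  simp [Complex.real_smul] at hv
  linarith

lemma eig_le {C : Matrix m m ℂ} (hC : C.IsHermitian) {s : ℝ}
    (h : ((s : ℂ) • 1 - C).PosSemidef) (i : m) : hC.eigenvalues i ≤ s := by
  have hv := h.re_dotProduct_nonneg (⇑(hC.eigenvectorBasis i))
  have hvv : dotProduct (star (⇑(hC.eigenvectorBasis i))) (⇑(hC.eigenvectorBasis i))
      = (1 : ℂ) := by
    have h1 : (inner ℂ (hC.eigenvectorBasis i) (hC.eigenvectorBasis i) : ℂ) = 1 := by
      rw [inner_self_eq_norm_sq_to_K]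
      simp [hC.eigenvectorBasis.orthonormal.1 i]
    rw [dotProduct_comm]; exact h1
  rw [Matrix.sub_mulVec, Matrix.smul_mulVec, Matrix.one_mulVec, dotProduct_sub,
    hC.mulVec_eigenvectorBasis, dotProduct_smul, dotProduct_smul, hvv] at hv
  simp [Complex.real_smul] at hv
  linarith

lemma psd_combo {C : Matrix m m ℂ} (hC : C.IsHermitian)
    (hne : ∀ i, hC.eigenvalues i ≠ 0) (c₀ c₁ c₂ : ℝ)
    (h : ∀ i, 0 ≤ c₀ + c₁ * hC.eigenvalues i + c₂ * (hC.eigenvalues i)⁻¹) :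
    ((c₀ : ℂ) • (1 : Matrix m m ℂ) + (c₁ : ℂ) • C + (c₂ : ℂ) • C⁻¹).PosSemidef := by
  set U : Matrix m m ℂ := (Matrix.IsHermitian.eigenvectorUnitary hC : Matrix m m ℂ) with hU
  have hU1 : U * star U = 1 :=
    (Matrix.mem_unitaryGroup_iff).mp (Matrix.IsHermitian.eigenvectorUnitary hC).2
  have hU2 : star U * U = 1 :=
    (Matrix.mem_unitaryGroup_iff').mp (Matrix.IsHermitian.eigenvectorUnitary hC).2
  have hCeq : C = U * Matrix.diagonal (fun i => (hC.eigenvalues i : ℂ)) * star U := by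
    simpa [Function.comp_def] using hC.spectral_theorem
  have hCinv : C⁻¹ = U * Matrix.diagonal (fun i => ((hC.eigenvalues i : ℂ))⁻¹) * star U := by
    apply Matrix.inv_eq_right_inv
    have hmid : star U * (U * (Matrix.diagonal (fun i => ((hC.eigenvalues i : ℂ))⁻¹) * star U))
        = Matrix.diagonal (fun i => ((hC.eigenvalues i : ℂ))⁻¹) * star U := by
      rw [← Matrix.mul_assoc, hU2, Matrix.one_mul]
    calc C * (U * Matrix.diagonal (fun i => ((hC.eigenvalues i : ℂ))⁻¹) * star U)
        = U * Matrix.diagonal (fun i => (hC.eigenvalues i : ℂ)) * star U *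
          (U * Matrix.diagonal (fun i => ((hC.eigenvalues i : ℂ))⁻¹) * star U) := by
          rw [← hCeq]
      _ = U * (Matrix.diagonal (fun i => (hC.eigenvalues i : ℂ)) *
            (star U * (U * (Matrix.diagonal (fun i => ((hC.eigenvalues i : ℂ))⁻¹) * star U)))) := by
          simp only [Matrix.mul_assoc]
      _ = U * (Matrix.diagonal (fun i => (hC.eigenvalues i : ℂ)) *
            (Matrix.diagonal (fun i => ((hC.eigenvalues i : ℂ))⁻¹) * star U)) := by rw [hmid]
      _ = U * ((Matrix.diagonal (fun i => (hC.eigenvalues i : ℂ)) *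
            Matrix.diagonal (fun i => ((hC.eigenvalues i : ℂ))⁻¹)) * star U) := by
          rw [Matrix.mul_assoc]
      _ = U * star U := by
          rw [Matrix.diagonal_mul_diagonal]
          have : (fun i => (hC.eigenvalues i : ℂ) * ((hC.eigenvalues i : ℂ))⁻¹)
              = fun _ => (1 : ℂ) := by
            funext i
            exact mul_inv_cancel₀ (by exact_mod_cast hne i)
          rw [this, Matrix.diagonal_one, Matrix.one_mul]
      _ = 1 := hU1
  have hd : Matrix.diagonal (fun i => ((c₀ + c₁ * hC.eigenvalues i
        + c₂ * (hC.eigenvalues i)⁻¹ : ℝ) : ℂ))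
      = (c₀ : ℂ) • (1 : Matrix m m ℂ)
        + (c₁ : ℂ) • Matrix.diagonal (fun i => (hC.eigenvalues i : ℂ))
        + (c₂ : ℂ) • Matrix.diagonal (fun i => ((hC.eigenvalues i : ℂ))⁻¹) := by
    ext i j
    by_cases hij : i = j
    · subst hij
      simp only [Matrix.diagonal_apply_eq, Matrix.add_apply, Matrix.smul_apply,
        Matrix.one_apply_eq, smul_eq_mul]
      push_cast
      ring
    · simp [Matrix.diagonal_apply_ne _ hij, Matrix.one_apply_ne hij]
  have key : (c₀ : ℂ) • (1 : Matrix m m ℂ) + (c₁ : ℂ) • C + (c₂ : ℂ) • C⁻¹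
      = U * Matrix.diagonal (fun i => ((c₀ + c₁ * hC.eigenvalues i
          + c₂ * (hC.eigenvalues i)⁻¹ : ℝ) : ℂ)) * star U := by
    rw [hd]
    simp only [Matrix.mul_add, Matrix.add_mul, Matrix.mul_smul, Matrix.smul_mul,
      Matrix.mul_one]
    rw [hU1, ← hCeq, ← hCinv]
  rw [key]
  have hdiag : (Matrix.diagonal (fun i => ((c₀ + c₁ * hC.eigenvalues i
      + c₂ * (hC.eigenvalues i)⁻¹ : ℝ) : ℂ))).PosSemidef := by
    apply Matrix.PosSemidef.diagonal
    intro i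
    simp only [Pi.zero_apply]
    exact_mod_cast h i
  have := hdiag.mul_mul_conjTranspose_same U
  rwa [← Matrix.star_eq_conjTranspose] at this

lemma kron_conjTranspose (X : Matrix m m ℂ) (Y : Matrix m' m' ℂ) :
    (X ⊗ₖ Y)ᴴ = Xᴴ ⊗ₖ Yᴴ := by
  ext ⟨i, j⟩ ⟨p, q⟩
  simp [Matrix.conjTranspose_apply, Matrix.kroneckerMap_apply, star_mul', mul_comm]

lemma kron_herm {X : Matrix m m ℂ} {Y : Matrix m' m' ℂ}
    (hX : X.IsHermitian) (hY : Y.IsHermitian) : (X ⊗ₖ Y).IsHermitian := by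
  rw [Matrix.IsHermitian, kron_conjTranspose, hX.eq, hY.eq]

lemma kron_psd {X : Matrix m m ℂ} {Y : Matrix m' m' ℂ}
    (hX : X.PosSemidef) (hY : Y.PosSemidef) : (X ⊗ₖ Y).PosSemidef := by
  obtain ⟨B, hB⟩ : ∃ B : Matrix m m ℂ, X = Bᴴ * B :=
    ⟨hX.sqrt, by rw [hX.posSemidef_sqrt.isHermitian.eq, hX.sqrt_mul_self]⟩
  obtain ⟨C, hC⟩ : ∃ C : Matrix m' m' ℂ, Y = Cᴴ * C :=
    ⟨hY.sqrt, by rw [hY.posSemidef_sqrt.isHermitian.eq, hY.sqrt_mul_self]⟩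
  have : X ⊗ₖ Y = (B ⊗ₖ C)ᴴ * (B ⊗ₖ C) := by
    rw [kron_conjTranspose, ← Matrix.mul_kronecker_mul, ← hB, ← hC]
  rw [this]
  exact Matrix.posSemidef_conjTranspose_mul_self _

lemma sub_kron (X X' : Matrix m m ℂ) (Y : Matrix m' m' ℂ) :
    (X - X') ⊗ₖ Y = X ⊗ₖ Y - X' ⊗ₖ Y := by
  ext ⟨i, j⟩ ⟨p, q⟩
  simp [Matrix.kroneckerMap_apply]
  ring

lemma kron_sub (X : Matrix m m ℂ) (Y Y' : Matrix m' m' ℂ) :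
    X ⊗ₖ (Y - Y') = X ⊗ₖ Y - X ⊗ₖ Y' := by
  ext ⟨i, j⟩ ⟨p, q⟩
  simp [Matrix.kroneckerMap_apply]
  ring

lemma kron_mono {X X' : Matrix m m ℂ} {Y Y' : Matrix m' m' ℂ}
    (hX' : X'.PosSemidef) (hY : Y.PosSemidef)
    (h1 : (X - X').PosSemidef) (h2 : (Y - Y').PosSemidef) :
    (X ⊗ₖ Y - X' ⊗ₖ Y').PosSemidef := by
  have key : X ⊗ₖ Y - X' ⊗ₖ Y' = (X - X') ⊗ₖ Y + X' ⊗ₖ (Y - Y') := by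
    rw [sub_kron, kron_sub]
    abel
  rw [key]
  exact (kron_psd h1 hY).add (kron_psd hX' h2)

lemma smul_one_kron_smul_one (c d : ℂ) :
    ((c • 1 : Matrix m m ℂ) ⊗ₖ (d • 1 : Matrix m' m' ℂ)) = (c * d) • 1 := by
  rw [Matrix.smul_kronecker, Matrix.kronecker_smul, Matrix.one_kronecker_one, smul_smul]

lemma smul_one_posdef {a : ℝ} (ha : 0 < a) :
    ((a : ℂ) • 1 : Matrix m m ℂ).PosDef := by
  have : ((a : ℂ) • 1 : Matrix m m ℂ) = Matrix.diagonal (fun _ => (a : ℂ)) := by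
    ext i j
    by_cases hij : i = j
    · subst hij; simp
    · simp [Matrix.one_apply_ne hij, Matrix.diagonal_apply_ne _ hij]
  rw [this]
  rw [Matrix.posDef_diagonal_iff]
  intro i
  exact_mod_cast ha

lemma smul_one_psd {a : ℝ} (ha : 0 ≤ a) :
    ((a : ℂ) • 1 : Matrix m m ℂ).PosSemidef := by
  rcases eq_or_lt_of_le ha with h | h
  · rw [← h, Complex.ofReal_zero, zero_smul]
    exact Matrix.PosSemidef.zero
  · exact (smul_one_posdef h).posSemidef

lemma herm_of_sub_psd {B : Matrix m m ℂ} {r : ℝ}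
    (h : (B - (r : ℂ) • 1).PosSemidef) : B.IsHermitian := by
  have h1' := h.isHermitian
  rw [Matrix.IsHermitian, Matrix.conjTranspose_sub, Matrix.conjTranspose_smul] at h1'
  have h2 : Bᴴ - (r : ℂ) • 1 = B - (r : ℂ) • 1 := by
    simpa [Complex.conj_ofReal] using h1'
  exact sub_left_inj.mp h2

lemma posdef_of_lb {B : Matrix m m ℂ} {r : ℝ} (hr : 0 < r)
    (h : (B - (r : ℂ) • 1).PosSemidef) : B.PosDef := by
  have hB : B = (r : ℂ) • 1 + (B - (r : ℂ) • 1) := by abel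
  rw [hB]
  exact (smul_one_posdef hr).add_posSemidef h

lemma inv_lb {B : Matrix m m ℂ} {r s : ℝ} (hr : 0 < r)
    (h1 : (B - (r : ℂ) • 1).PosSemidef) (h2 : ((s : ℂ) • 1 - B).PosSemidef) :
    (B⁻¹ - ((s⁻¹ : ℝ) : ℂ) • 1).PosSemidef := by
  have hB := herm_of_sub_psd h1
  have hne : ∀ i, hB.eigenvalues i ≠ 0 :=
    fun i => ne_of_gt (lt_of_lt_of_le hr (eig_ge hB h1 i))
  have h := psd_combo hB hne (-s⁻¹) 0 1 (fun i => by
    have hge := eig_ge hB h1 i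
    have hle := eig_le hB h2 i
    have hpos : 0 < hB.eigenvalues i := lt_of_lt_of_le hr hge
    have hspos : 0 < s := lt_of_lt_of_le hpos hle
    have : s⁻¹ ≤ (hB.eigenvalues i)⁻¹ := by
      apply inv_anti₀ hpos hle
    simp only [zero_mul]
    linarith)
  have e : ((-s⁻¹ : ℝ) : ℂ) • (1 : Matrix m m ℂ) + ((0 : ℝ) : ℂ) • B + ((1 : ℝ) : ℂ) • B⁻¹
      = B⁻¹ - ((s⁻¹ : ℝ) : ℂ) • 1 := by
    push_cast
    module
  rwa [e] at h

lemma inv_ub {B : Matrix m m ℂ} {r s : ℝ} (hr : 0 < r)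
    (h1 : (B - (r : ℂ) • 1).PosSemidef) (h2 : ((s : ℂ) • 1 - B).PosSemidef) :
    (((r⁻¹ : ℝ) : ℂ) • 1 - B⁻¹).PosSemidef := by
  have hB := herm_of_sub_psd h1
  have hne : ∀ i, hB.eigenvalues i ≠ 0 :=
    fun i => ne_of_gt (lt_of_lt_of_le hr (eig_ge hB h1 i))
  have h := psd_combo hB hne r⁻¹ 0 (-1) (fun i => by
    have hge := eig_ge hB h1 i
    have hpos : 0 < hB.eigenvalues i := lt_of_lt_of_le hr hge
    have : (hB.eigenvalues i)⁻¹ ≤ r⁻¹ := by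
      apply inv_anti₀ hr hge
    simp only [zero_mul]
    linarith)
  have e : ((r⁻¹ : ℝ) : ℂ) • (1 : Matrix m m ℂ) + ((0 : ℝ) : ℂ) • B + ((-1 : ℝ) : ℂ) • B⁻¹
      = ((r⁻¹ : ℝ) : ℂ) • 1 - B⁻¹ := by
    push_cast
    module
  rwa [e] at h

lemma core {C : Matrix m m ℂ} {r s : ℝ} (hr : 0 < r)
    (h1 : (C - (r : ℂ) • 1).PosSemidef) (h2 : ((s : ℂ) • 1 - C).PosSemidef) :
    (((r + s : ℝ) : ℂ) • 1 - C - ((r * s : ℝ) : ℂ) • C⁻¹).PosSemidef := by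
  have hC := herm_of_sub_psd h1
  have hne : ∀ i, hC.eigenvalues i ≠ 0 :=
    fun i => ne_of_gt (lt_of_lt_of_le hr (eig_ge hC h1 i))
  have h := psd_combo hC hne (r + s) (-1) (-(r * s)) (fun i => by
    have hge := eig_ge hC h1 i
    have hle := eig_le hC h2 i
    have hpos : 0 < hC.eigenvalues i := lt_of_lt_of_le hr hge
    have hinv : hC.eigenvalues i * (hC.eigenvalues i)⁻¹ = 1 := mul_inv_cancel₀ hpos.ne'
    have hmul : 0 ≤ (hC.eigenvalues i - r) * (s - hC.eigenvalues i) :=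
      mul_nonneg (by linarith) (by linarith)
    have hinvpos : 0 < (hC.eigenvalues i)⁻¹ := by positivity
    nlinarith [mul_nonneg hmul hinvpos.le])
  have e : ((r + s : ℝ) : ℂ) • (1 : Matrix m m ℂ) + ((-1 : ℝ) : ℂ) • C
      + ((-(r * s) : ℝ) : ℂ) • C⁻¹
      = ((r + s : ℝ) : ℂ) • 1 - C - ((r * s : ℝ) : ℂ) • C⁻¹ := by
    push_cast
    module
  rwa [e] at h

lemma pair {a b : ℝ} (ha : 0 < a) (hab : a ≤ b) {A : Matrix m m ℂ} {B : Matrix m' m' ℂ}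
    (hAa : (A - (a : ℂ) • 1).PosSemidef) (hAb : ((b : ℂ) • 1 - A).PosSemidef)
    (hBa : (B - (a : ℂ) • 1).PosSemidef) (hBb : ((b : ℂ) • 1 - B).PosSemidef) :
    ((((a ^ 2 + b ^ 2) / (a * b) : ℝ) : ℂ) • 1 - A ⊗ₖ B⁻¹ - A⁻¹ ⊗ₖ B).PosSemidef := by
  have hb : 0 < b := lt_of_lt_of_le ha hab
  have hA := herm_of_sub_psd hAa
  have hApd := posdef_of_lb ha hAa
  have hBpd := posdef_of_lb ha hBa
  have hBinv_lb : (B⁻¹ - ((b⁻¹ : ℝ) : ℂ) • 1).PosSemidef := inv_lb ha hBa hBb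
  have hBinv_ub : (((a⁻¹ : ℝ) : ℂ) • 1 - B⁻¹).PosSemidef := inv_ub ha hBa hBb
  have hCH : (A ⊗ₖ B⁻¹).IsHermitian := kron_herm hA hBpd.inv.isHermitian
  have hC_lb : (A ⊗ₖ B⁻¹ - ((a / b : ℝ) : ℂ) • 1).PosSemidef := by
    have h := kron_mono (smul_one_psd ha.le) hBpd.inv.posSemidef hAa hBinv_lb
    rw [smul_one_kron_smul_one] at h
    have e : ((a : ℂ) * ((b⁻¹ : ℝ) : ℂ)) = ((a / b : ℝ) : ℂ) := by
      push_cast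
      ring
    rwa [e] at h
  have hC_ub : (((b / a : ℝ) : ℂ) • 1 - A ⊗ₖ B⁻¹).PosSemidef := by
    have h := kron_mono hApd.posSemidef (smul_one_psd (by positivity : (0:ℝ) ≤ a⁻¹))
      hAb hBinv_ub
    rw [smul_one_kron_smul_one] at h
    have e : ((b : ℂ) * ((a⁻¹ : ℝ) : ℂ)) = ((b / a : ℝ) : ℂ) := by
      push_cast
      ring
    rwa [e] at h
  have hCinv : (A ⊗ₖ B⁻¹)⁻¹ = A⁻¹ ⊗ₖ B := by
    rw [Matrix.inv_kronecker, Matrix.nonsing_inv_nonsing_inv]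
    exact (Matrix.isUnit_iff_isUnit_det _).mp hBpd.isUnit
  have hcore := core (by positivity : (0:ℝ) < a / b) hC_lb hC_ub
  rw [hCinv] at hcore
  have e1 : ((a / b + b / a : ℝ) : ℂ) = (((a ^ 2 + b ^ 2) / (a * b) : ℝ) : ℂ) := by
    norm_cast
    field_simp
  have e2 : ((a / b * (b / a) : ℝ) : ℂ) = 1 := by
    norm_cast
    field_simp
  rwa [e1, e2, one_smul] at hcore

lemma sum_kron {ι : Type*} (s : Finset ι) (F : ι → Matrix m m ℂ) (Y : Matrix m' m' ℂ) :
    (∑ i ∈ s, F i) ⊗ₖ Y = ∑ i ∈ s, F i ⊗ₖ Y := by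
  ext ⟨i, j⟩ ⟨p, q⟩
  simp [Matrix.kroneckerMap_apply, Matrix.sum_apply, Finset.sum_mul]

lemma kron_sum' {ι : Type*} (s : Finset ι) (X : Matrix m m ℂ) (G : ι → Matrix m' m' ℂ) :
    X ⊗ₖ (∑ j ∈ s, G j) = ∑ j ∈ s, X ⊗ₖ G j := by
  ext ⟨i, j⟩ ⟨p, q⟩
  simp [Matrix.kroneckerMap_apply, Matrix.sum_apply, Finset.mul_sum]

lemma sum_kron_sum {ι ι' : Type*} (s : Finset ι) (t : Finset ι')
    (F : ι → Matrix m m ℂ) (G : ι' → Matrix m' m' ℂ) :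
    (∑ i ∈ s, F i) ⊗ₖ (∑ j ∈ t, G j) = ∑ i ∈ s, ∑ j ∈ t, F i ⊗ₖ G j := by
  rw [sum_kron]
  exact Finset.sum_congr rfl fun i _ => kron_sum' _ _ _

lemma psd_sum {ι : Type*} (s : Finset ι) (F : ι → Matrix m m ℂ)
    (h : ∀ i ∈ s, (F i).PosSemidef) : (∑ i ∈ s, F i).PosSemidef :=
  Finset.sum_induction F _ (fun _ _ ha hb => ha.add hb) Matrix.PosSemidef.zero h

end KantAux

/-- Corollary 3.3: discrete Kantorovich type inequality for the symmetrized tensor product. -/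
theorem kantorovich_sum_tensor {k n : ℕ} (a b : ℝ) (ha : 0 < a) (hab : a ≤ b)
    (A W : Fin n → Matrix (Fin k) (Fin k) ℂ)
    (hAherm : ∀ i, (A i).IsHermitian)
    (hAa : ∀ i, (A i - a • 1).PosSemidef)
    (hAb : ∀ i, ((b • 1 : Matrix (Fin k) (Fin k) ℂ) - A i).PosSemidef)
    (hW : ∀ i, (W i).PosSemidef) :
    (((a ^ 2 + b ^ 2) / (2 * a * b)) • ((∑ i, W i) ⊗ₖ (∑ i, W i))
      - symKron (∑ i, (hW i).sqrt * A i * (hW i).sqrt)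
          (∑ i, (hW i).sqrt * (A i)⁻¹ * (hW i).sqrt)).PosSemidef := by
  classical
  have hb : 0 < b := lt_of_lt_of_le ha hab
  have hAa' : ∀ i, (A i - ((a : ℝ) : ℂ) • 1).PosSemidef := fun i => by
    have h := hAa i
    rwa [KantAux.real_smul_eq] at h
  have hAb' : ∀ i, (((b : ℝ) : ℂ) • 1 - A i).PosSemidef := fun i => by
    have h := hAb i
    rwa [KantAux.real_smul_eq] at h
  have hP : ∀ i j : Fin n,
      ((((a ^ 2 + b ^ 2) / (a * b) : ℝ) : ℂ) • (W i ⊗ₖ W j)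
        - ((hW i).sqrt * A i * (hW i).sqrt) ⊗ₖ ((hW j).sqrt * (A j)⁻¹ * (hW j).sqrt)
        - ((hW i).sqrt * (A i)⁻¹ * (hW i).sqrt) ⊗ₖ
            ((hW j).sqrt * A j * (hW j).sqrt)).PosSemidef := by
    intro i j
    have hM := KantAux.pair ha hab (hAa' i) (hAb' i) (hAa' j) (hAb' j)
    have hTH : ((hW i).sqrt ⊗ₖ (hW j).sqrt)ᴴ = (hW i).sqrt ⊗ₖ (hW j).sqrt := by
      rw [KantAux.kron_conjTranspose, ((hW i).posSemidef_sqrt.isHermitian).eq,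
        ((hW j).posSemidef_sqrt.isHermitian).eq]
    have hpsd := hM.mul_mul_conjTranspose_same ((hW i).sqrt ⊗ₖ (hW j).sqrt)
    rw [hTH] at hpsd
    have key : ((hW i).sqrt ⊗ₖ (hW j).sqrt)
          * ((((a ^ 2 + b ^ 2) / (a * b) : ℝ) : ℂ) • 1 - A i ⊗ₖ (A j)⁻¹ - (A i)⁻¹ ⊗ₖ A j)
          * ((hW i).sqrt ⊗ₖ (hW j).sqrt)
        = (((a ^ 2 + b ^ 2) / (a * b) : ℝ) : ℂ) • (W i ⊗ₖ W j)
          - ((hW i).sqrt * A i * (hW i).sqrt) ⊗ₖ ((hW j).sqrt * (A j)⁻¹ * (hW j).sqrt)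
          - ((hW i).sqrt * (A i)⁻¹ * (hW i).sqrt) ⊗ₖ ((hW j).sqrt * A j * (hW j).sqrt) := by
      simp only [Matrix.mul_sub, Matrix.sub_mul, Matrix.mul_smul, Matrix.smul_mul,
        Matrix.mul_one, ← Matrix.mul_kronecker_mul]
      rw [(hW i).sqrt_mul_self, (hW j).sqrt_mul_self]
    rwa [key] at hpsd
  have hQ : (∑ i : Fin n, ∑ j : Fin n,
      ((((a ^ 2 + b ^ 2) / (a * b) : ℝ) : ℂ) • (W i ⊗ₖ W j)
        - ((hW i).sqrt * A i * (hW i).sqrt) ⊗ₖ ((hW j).sqrt * (A j)⁻¹ * (hW j).sqrt)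
        - ((hW i).sqrt * (A i)⁻¹ * (hW i).sqrt) ⊗ₖ
            ((hW j).sqrt * A j * (hW j).sqrt))).PosSemidef :=
    KantAux.psd_sum _ _ (fun i _ => KantAux.psd_sum _ _ (fun j _ => hP i j))
  have hWW := KantAux.sum_kron_sum Finset.univ Finset.univ W W
  have hXY := KantAux.sum_kron_sum Finset.univ Finset.univ
    (fun i => (hW i).sqrt * A i * (hW i).sqrt)
    (fun j => (hW j).sqrt * (A j)⁻¹ * (hW j).sqrt)
  have hYX := KantAux.sum_kron_sum Finset.univ Finset.univ
    (fun i => (hW i).sqrt * (A i)⁻¹ * (hW i).sqrt)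
    (fun j => (hW j).sqrt * A j * (hW j).sqrt)
  have expand : (((a ^ 2 + b ^ 2) / (a * b) : ℝ) : ℂ) • ((∑ i, W i) ⊗ₖ (∑ i, W i))
      - (∑ i, (hW i).sqrt * A i * (hW i).sqrt) ⊗ₖ (∑ i, (hW i).sqrt * (A i)⁻¹ * (hW i).sqrt)
      - (∑ i, (hW i).sqrt * (A i)⁻¹ * (hW i).sqrt) ⊗ₖ (∑ i, (hW i).sqrt * A i * (hW i).sqrt)
      = ∑ i : Fin n, ∑ j : Fin n,
        ((((a ^ 2 + b ^ 2) / (a * b) : ℝ) : ℂ) • (W i ⊗ₖ W j)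
          - ((hW i).sqrt * A i * (hW i).sqrt) ⊗ₖ ((hW j).sqrt * (A j)⁻¹ * (hW j).sqrt)
          - ((hW i).sqrt * (A i)⁻¹ * (hW i).sqrt) ⊗ₖ ((hW j).sqrt * A j * (hW j).sqrt)) := by
    rw [hWW, hXY, hYX, Finset.smul_sum]
    rw [← Finset.sum_sub_distrib, ← Finset.sum_sub_distrib]
    refine Finset.sum_congr rfl fun i _ => ?_
    rw [Finset.smul_sum, ← Finset.sum_sub_distrib, ← Finset.sum_sub_distrib]
  have hcr : (a ^ 2 + b ^ 2) / (2 * a * b) = 1 / 2 * ((a ^ 2 + b ^ 2) / (a * b)) := by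
    rw [one_div, inv_mul_eq_div, div_div]
    ring_nf
  have final_eq : ((a ^ 2 + b ^ 2) / (2 * a * b)) • ((∑ i, W i) ⊗ₖ (∑ i, W i))
      - symKron (∑ i, (hW i).sqrt * A i * (hW i).sqrt)
          (∑ i, (hW i).sqrt * (A i)⁻¹ * (hW i).sqrt)
      = (((1 / 2 : ℝ)) : ℂ) • ∑ i : Fin n, ∑ j : Fin n,
        ((((a ^ 2 + b ^ 2) / (a * b) : ℝ) : ℂ) • (W i ⊗ₖ W j)
          - ((hW i).sqrt * A i * (hW i).sqrt) ⊗ₖ ((hW j).sqrt * (A j)⁻¹ * (hW j).sqrt)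
          - ((hW i).sqrt * (A i)⁻¹ * (hW i).sqrt) ⊗ₖ ((hW j).sqrt * A j * (hW j).sqrt)) := by
    rw [show symKron (∑ i, (hW i).sqrt * A i * (hW i).sqrt)
          (∑ i, (hW i).sqrt * (A i)⁻¹ * (hW i).sqrt)
        = ((1 : ℂ) / 2) • ((∑ i, (hW i).sqrt * A i * (hW i).sqrt) ⊗ₖ
              (∑ i, (hW i).sqrt * (A i)⁻¹ * (hW i).sqrt)
            + (∑ i, (hW i).sqrt * (A i)⁻¹ * (hW i).sqrt) ⊗ₖ
              (∑ i, (hW i).sqrt * A i * (hW i).sqrt)) from rfl]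
    rw [KantAux.real_smul_eq, ← expand, hcr]
    push_cast
    module
  rw [final_eq]
  exact KantAux.psd_smul hQ (by norm_num)
end

section
/- Let 0 < a ≤ b be real numbers. For each i = 1, 2, …, n, let A_i be a Hermitian k×k complex matrix with a·I ≤ A_i ≤ b·I, and let w_i ≥ 0 be a real constant. Then (∑_{i=1}^n w_i A_i) ⊗_s (∑_{i=1}^n w_i A_i⁻¹) ≤ ((a² + b²)/(2ab)) · (∑_{i=1}^n w_i)² · I, where I is the k²×k² identity matrix. -/
open Matrix MeasureTheory
open scoped Kronecker ComplexOrder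

attribute [local instance] Matrix.frobeniusNormedAddCommGroup Matrix.frobeniusNormedSpace

set_option linter.unusedSectionVars false
set_option maxHeartbeats 1000000

section KantorovichAux

variable {m p : Type*} [Fintype m] [DecidableEq m] [Fintype p] [DecidableEq p]

lemma real_smul_eqC {α β : Type*} (r : ℝ) (M : Matrix α β ℂ) : r • M = (r : ℂ) • M := by
  ext i j; simp [Matrix.smul_apply, Complex.real_smul]

example (r : ℝ) : (RCLike.ofReal r : ℂ) = Complex.ofReal r := rfl

lemma posSemidef_rsmul {M : Matrix m m ℂ} (hM : M.PosSemidef) {r : ℝ} (hr : 0 ≤ r) :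
    (r • M).PosSemidef := by
  rw [real_smul_eqC]
  refine PosSemidef.of_dotProduct_mulVec_nonneg ?_ (fun x => ?_)
  · unfold Matrix.IsHermitian
    rw [conjTranspose_smul, hM.1.eq]
    simp
  · rw [smul_mulVec, dotProduct_smul, smul_eq_mul]
    exact mul_nonneg (by exact_mod_cast hr) (hM.dotProduct_mulVec_nonneg x)

lemma posSemidef_sum {ι : Type*} (s : Finset ι) (f : ι → Matrix m m ℂ)
    (h : ∀ i ∈ s, (f i).PosSemidef) : (∑ i ∈ s, f i).PosSemidef :=
  Finset.sum_induction f _ (fun _ _ ha hb => ha.add hb) .zero h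

lemma conjT_kron (A : Matrix m m ℂ) (B : Matrix p p ℂ) : (A ⊗ₖ B)ᴴ = Aᴴ ⊗ₖ Bᴴ := by
  ext ⟨i, j⟩ ⟨i', j'⟩
  simp [conjTranspose_apply, kroneckerMap_apply, mul_comm]

lemma posSemidef_kron {A : Matrix m m ℂ} {B : Matrix p p ℂ}
    (hA : A.PosSemidef) (hB : B.PosSemidef) : (A ⊗ₖ B).PosSemidef := by
  exact hA.kronecker hB

lemma sub_kron (A B : Matrix m m ℂ) (C : Matrix p p ℂ) :
    (A - B) ⊗ₖ C = A ⊗ₖ C - B ⊗ₖ C := by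
  ext ⟨i, j⟩ ⟨i', j'⟩
  simp [kroneckerMap_apply, sub_mul]

lemma kron_sub (A : Matrix m m ℂ) (B C : Matrix p p ℂ) :
    A ⊗ₖ (B - C) = A ⊗ₖ B - A ⊗ₖ C := by
  ext ⟨i, j⟩ ⟨i', j'⟩
  simp [kroneckerMap_apply, mul_sub]

lemma sum_kron {ι : Type*} (s : Finset ι) (f : ι → Matrix m m ℂ) (B : Matrix p p ℂ) :
    (∑ i ∈ s, f i) ⊗ₖ B = ∑ i ∈ s, (f i) ⊗ₖ B := by
  ext ⟨i, j⟩ ⟨i', j'⟩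
  simp [kroneckerMap_apply, Matrix.sum_apply, Finset.sum_mul]

lemma kron_sum {ι : Type*} (s : Finset ι) (A : Matrix m m ℂ) (f : ι → Matrix p p ℂ) :
    A ⊗ₖ (∑ i ∈ s, f i) = ∑ i ∈ s, A ⊗ₖ (f i) := by
  ext ⟨i, j⟩ ⟨i', j'⟩
  simp [kroneckerMap_apply, Matrix.sum_apply, Finset.mul_sum]

lemma star_dot_self {X : Matrix m m ℂ} (hX : X.IsHermitian) (i : m) :
    star (⇑(hX.eigenvectorBasis i)) ⬝ᵥ ⇑(hX.eigenvectorBasis i) = 1 := by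
  have h1 : (inner ℂ (hX.eigenvectorBasis i) (hX.eigenvectorBasis i) : ℂ) = 1 := by
    rw [inner_self_eq_norm_sq_to_K, hX.eigenvectorBasis.orthonormal.1 i]
    norm_num
  rw [EuclideanSpace.inner_eq_star_dotProduct] at h1
  simpa [dotProduct_comm] using h1

lemma eig_lb {X : Matrix m m ℂ} (hX : X.IsHermitian) {t : ℝ}
    (h : (X - t • 1).PosSemidef) (i : m) : t ≤ hX.eigenvalues i := by
  have hv1 := star_dot_self hX i
  have h2 := h.dotProduct_mulVec_nonneg (⇑(hX.eigenvectorBasis i))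
  rw [sub_mulVec, smul_mulVec, one_mulVec, hX.mulVec_eigenvectorBasis,
    dotProduct_sub, dotProduct_smul, dotProduct_smul, hv1] at h2
  simp only [Complex.real_smul, mul_one, ← Complex.ofReal_sub] at h2
  have := (Complex.zero_le_real).1 h2
  linarith

lemma eig_ub {X : Matrix m m ℂ} (hX : X.IsHermitian) {s : ℝ}
    (h : ((s • 1 : Matrix m m ℂ) - X).PosSemidef) (i : m) : hX.eigenvalues i ≤ s := by
  have hv1 := star_dot_self hX i
  have h2 := h.dotProduct_mulVec_nonneg (⇑(hX.eigenvectorBasis i))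
  rw [sub_mulVec, smul_mulVec, one_mulVec, hX.mulVec_eigenvectorBasis,
    dotProduct_sub, dotProduct_smul, dotProduct_smul, hv1] at h2
  simp only [Complex.real_smul, mul_one, ← Complex.ofReal_sub] at h2
  have := (Complex.zero_le_real).1 h2
  linarith

lemma unitary_mul_star {X : Matrix m m ℂ} (hX : X.IsHermitian) :
    (hX.eigenvectorUnitary : Matrix m m ℂ) * star (hX.eigenvectorUnitary : Matrix m m ℂ) = 1 :=
  Matrix.mem_unitaryGroup_iff.mp hX.eigenvectorUnitary.2

lemma star_mul_unitary {X : Matrix m m ℂ} (hX : X.IsHermitian) :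
    star (hX.eigenvectorUnitary : Matrix m m ℂ) * (hX.eigenvectorUnitary : Matrix m m ℂ) = 1 :=
  Matrix.mem_unitaryGroup_iff'.mp hX.eigenvectorUnitary.2

lemma conj_diag_psd' (U : Matrix m m ℂ) (g : m → ℝ) (hg : ∀ i, 0 ≤ g i) :
    (U * diagonal (fun i => ((g i : ℝ) : ℂ)) * star U).PosSemidef := by
  rw [Matrix.star_eq_conjTranspose]
  exact (PosSemidef.diagonal fun i => by
    simpa using Complex.zero_le_real.2 (hg i)).mul_mul_conjTranspose_same _

lemma conj_comb {X : Matrix m m ℂ} (hX : X.IsHermitian) (c₀ c₁ c₂ : ℝ)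
    (hpos : ∀ i, 0 < hX.eigenvalues i)
    (hnn : ∀ i, 0 ≤ c₀ - c₁ * hX.eigenvalues i - c₂ * (hX.eigenvalues i)⁻¹) :
    (c₀ • (1 : Matrix m m ℂ) - c₁ • X - c₂ • X⁻¹).PosSemidef := by
  have hUs := unitary_mul_star hX
  have hsU := star_mul_unitary hX
  have hXeq := hX.spectral_theorem
  rw [Unitary.conjStarAlgAut_apply] at hXeq
  set U := (hX.eigenvectorUnitary : Matrix m m ℂ) with hU
  set Λ := hX.eigenvalues with hΛ
  -- inverse formula
  have hD : diagonal (fun i => ((Λ i : ℝ) : ℂ)⁻¹) * diagonal (RCLike.ofReal ∘ Λ)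
      = 1 := by
    rw [diagonal_mul_diagonal]
    have : (fun i => ((Λ i : ℝ) : ℂ)⁻¹ * (RCLike.ofReal ∘ Λ) i) = fun _ => (1 : ℂ) := by
      funext i
      have hne : ((Λ i : ℝ) : ℂ) ≠ 0 := by exact_mod_cast (hpos i).ne'
      simpa [Function.comp] using inv_mul_cancel₀ hne
    rw [this, diagonal_one]
  have hXinv : X⁻¹ = U * diagonal (fun i => ((Λ i : ℝ) : ℂ)⁻¹) * star U := by
    apply inv_eq_left_inv
    rw [hXeq]
    calc U * diagonal (fun i => ((Λ i : ℝ) : ℂ)⁻¹) * star U *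
          (U * diagonal (RCLike.ofReal ∘ Λ) * star U)
        = U * (diagonal (fun i => ((Λ i : ℝ) : ℂ)⁻¹) * (star U * U) *
            diagonal (RCLike.ofReal ∘ Λ)) * star U := by
          simp only [Matrix.mul_assoc]
      _ = 1 := by rw [hsU, Matrix.mul_one, hD, Matrix.mul_one, hUs]
  rw [hXinv, hXeq]
  have hone : (1 : Matrix m m ℂ) = U * 1 * star U := by rw [Matrix.mul_one, hUs]
  have hgoal : c₀ • (U * 1 * star U) - c₁ • (U * diagonal (RCLike.ofReal ∘ Λ) * star U)
      - c₂ • (U * diagonal (fun i => ((Λ i : ℝ) : ℂ)⁻¹) * star U)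
      = U * diagonal (fun i => ((c₀ - c₁ * Λ i - c₂ * (Λ i)⁻¹ : ℝ) : ℂ)) * star U := by
    have factor : ∀ (M : Matrix m m ℂ) (r : ℝ),
        r • (U * M * star U) = U * (r • M) * star U := fun M r => by
      rw [Matrix.mul_smul, Matrix.smul_mul]
    rw [factor, factor, factor, ← Matrix.sub_mul, ← Matrix.mul_sub, ← Matrix.sub_mul,
      ← Matrix.mul_sub]
    congr 2
    ext i j
    rcases eq_or_ne i j with h | h
    · subst h
      simp only [show (RCLike.ofReal : ℝ → ℂ) = Complex.ofReal from rfl,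
        Matrix.sub_apply, Matrix.smul_apply, Matrix.one_apply_eq,
        diagonal_apply_eq, Function.comp_apply, Complex.real_smul]
      push_cast
      ring
    · simp [Matrix.smul_apply, Matrix.one_apply_ne h, diagonal_apply_ne _ h]
  rw [← hone] at hgoal
  rw [hgoal]
  exact conj_diag_psd' U _ hnn

lemma isUnit_det_of_eig_pos {X : Matrix m m ℂ} (hX : X.IsHermitian)
    (hpos : ∀ i, 0 < hX.eigenvalues i) : IsUnit X.det := by
  rw [hX.det_eq_prod_eigenvalues]
  refine isUnit_iff_ne_zero.2 (Finset.prod_ne_zero_iff.2 fun i _ => ?_)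
  exact RCLike.ofReal_ne_zero.mpr (hpos i).ne'

lemma bounds_package {X : Matrix m m ℂ} (hX : X.IsHermitian) {t s : ℝ} (ht : 0 < t)
    (h1 : (X - t • 1).PosSemidef) (h2 : ((s • 1 : Matrix m m ℂ) - X).PosSemidef) :
    (X⁻¹ - s⁻¹ • 1).PosSemidef ∧ ((t⁻¹ • 1 : Matrix m m ℂ) - X⁻¹).PosSemidef ∧
      IsUnit X.det ∧ X.PosSemidef ∧ X⁻¹.PosSemidef := by
  have hpos : ∀ i, 0 < hX.eigenvalues i := fun i => lt_of_lt_of_le ht (eig_lb hX h1 i)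
  have hub := eig_ub hX h2
  have hXpsd : X.PosSemidef := by
    have := h1.add (posSemidef_rsmul PosSemidef.one ht.le)
    rwa [sub_add_cancel] at this
  refine ⟨?_, ?_, isUnit_det_of_eig_pos hX hpos, hXpsd, hXpsd.inv⟩
  · have h := conj_comb hX (-s⁻¹) 0 (-1) hpos (fun i => by
      have h3 : (hX.eigenvalues i)⁻¹ ≥ s⁻¹ := by
        apply inv_anti₀ (hpos i) (hub i)
      simp only [zero_mul, neg_one_mul]
      linarith)
    have heq : X⁻¹ - s⁻¹ • (1 : Matrix m m ℂ)
        = (-s⁻¹) • (1 : Matrix m m ℂ) - (0:ℝ) • X - (-1:ℝ) • X⁻¹ := by module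
    rwa [← heq] at h
  · have h := conj_comb hX t⁻¹ 0 1 hpos (fun i => by
      have h3 : (hX.eigenvalues i)⁻¹ ≤ t⁻¹ := by
        apply inv_anti₀ ht (eig_lb hX h1 i)
      simp only [zero_mul, one_mul]
      linarith)
    have heq : (t⁻¹ • (1 : Matrix m m ℂ)) - X⁻¹
        = t⁻¹ • (1 : Matrix m m ℂ) - (0:ℝ) • X - (1:ℝ) • X⁻¹ := by module
    rwa [← heq] at h

lemma kant_core {X : Matrix m m ℂ} (hX : X.IsHermitian) {t s : ℝ} (ht : 0 < t)
    (hts : t * s = 1) (h1 : (X - t • 1).PosSemidef)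
    (h2 : ((s • 1 : Matrix m m ℂ) - X).PosSemidef) :
    ((t + s) • (1 : Matrix m m ℂ) - X - X⁻¹).PosSemidef := by
  have hpos : ∀ i, 0 < hX.eigenvalues i := fun i => lt_of_lt_of_le ht (eig_lb hX h1 i)
  have h := conj_comb hX (t + s) 1 1 hpos (fun i => by
    have hlb := eig_lb hX h1 i
    have hub := eig_ub hX h2 i
    have hp := hpos i
    have hinv : hX.eigenvalues i * (hX.eigenvalues i)⁻¹ = 1 := mul_inv_cancel₀ hp.ne'
    have key0 : 0 ≤ (hX.eigenvalues i)⁻¹ * ((hX.eigenvalues i - t) * (s - hX.eigenvalues i)) :=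
      mul_nonneg (inv_nonneg.2 hp.le) (mul_nonneg (by linarith) (by linarith))
    nlinarith [key0, hinv])
  have heq : (t + s) • (1 : Matrix m m ℂ) - X - X⁻¹
      = (t + s) • (1 : Matrix m m ℂ) - (1:ℝ) • X - (1:ℝ) • X⁻¹ := by module
  rwa [← heq] at h

lemma pair_lemma {X Y : Matrix m m ℂ} (hX : X.IsHermitian) (hY : Y.IsHermitian)
    {a b : ℝ} (ha : 0 < a) (hab : a ≤ b)
    (hX1 : (X - a • 1).PosSemidef) (hX2 : ((b • 1 : Matrix m m ℂ) - X).PosSemidef)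
    (hY1 : (Y - a • 1).PosSemidef) (hY2 : ((b • 1 : Matrix m m ℂ) - Y).PosSemidef) :
    ((((a ^ 2 + b ^ 2) / (2 * a * b)) • (1 : Matrix (m × m) (m × m) ℂ))
      - (1/2 : ℝ) • (X ⊗ₖ Y⁻¹ + X⁻¹ ⊗ₖ Y)).PosSemidef := by
  have hb : 0 < b := lt_of_lt_of_le ha hab
  obtain ⟨hYi1, hYi2, hYdet, hYpsd, hYipsd⟩ := bounds_package hY ha hY1 hY2
  have hXpsd : X.PosSemidef := by
    have := hX1.add (posSemidef_rsmul PosSemidef.one ha.le)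
    rwa [sub_add_cancel] at this
  -- Z and its hermitian-ness
  have hZherm : (X ⊗ₖ Y⁻¹).IsHermitian := by
    unfold Matrix.IsHermitian
    rw [conjT_kron, hX.eq, hY.inv.eq]
  -- lower bound
  have e1 : X ⊗ₖ Y⁻¹ - (a/b) • (1 : Matrix (m × m) (m × m) ℂ)
      = (X - a • 1) ⊗ₖ Y⁻¹ + (a • (1 : Matrix m m ℂ)) ⊗ₖ (Y⁻¹ - b⁻¹ • (1 : Matrix m m ℂ)) := by
    simp only [sub_kron, kron_sub, smul_kronecker, kronecker_smul, one_kronecker_one]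
    module
  have hZ1 : (X ⊗ₖ Y⁻¹ - (a/b) • (1 : Matrix (m × m) (m × m) ℂ)).PosSemidef := by
    rw [e1]
    exact (posSemidef_kron hX1 hYipsd).add
      (posSemidef_kron (posSemidef_rsmul PosSemidef.one ha.le) hYi1)
  -- upper bound
  have e2 : (b/a) • (1 : Matrix (m × m) (m × m) ℂ) - X ⊗ₖ Y⁻¹
      = ((b • 1 : Matrix m m ℂ) - X) ⊗ₖ Y⁻¹
        + (b • (1 : Matrix m m ℂ)) ⊗ₖ (a⁻¹ • (1 : Matrix m m ℂ) - Y⁻¹) := by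
    simp only [sub_kron, kron_sub, smul_kronecker, kronecker_smul, one_kronecker_one]
    module
  have hZ2 : ((b/a) • (1 : Matrix (m × m) (m × m) ℂ) - X ⊗ₖ Y⁻¹).PosSemidef := by
    rw [e2]
    exact (posSemidef_kron hX2 hYipsd).add
      (posSemidef_kron (posSemidef_rsmul PosSemidef.one hb.le) hYi2)
  -- core
  have hts : (a/b) * (b/a) = 1 := by field_simp
  have hcore := kant_core hZherm (div_pos ha hb) hts hZ1 hZ2
  have hZinv : (X ⊗ₖ Y⁻¹)⁻¹ = X⁻¹ ⊗ₖ Y := by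
    rw [inv_kronecker, nonsing_inv_nonsing_inv _ hYdet]
  rw [hZinv] at hcore
  have hc : (a ^ 2 + b ^ 2) / (2 * a * b) = (1/2) * (a/b + b/a) := by
    field_simp
  rw [hc]
  have heq : ((1/2) * (a/b + b/a)) • (1 : Matrix (m × m) (m × m) ℂ)
      - (1/2 : ℝ) • (X ⊗ₖ Y⁻¹ + X⁻¹ ⊗ₖ Y)
      = (1/2 : ℝ) • ((a/b + b/a) • (1 : Matrix (m × m) (m × m) ℂ) - X ⊗ₖ Y⁻¹ - X⁻¹ ⊗ₖ Y) := by
    module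
  rw [heq]
  exact posSemidef_rsmul hcore (by norm_num)

end KantorovichAux

/-- Corollary 3.5: discrete Kantorovich type inequality with scalar weights. -/
theorem kantorovich_sum_tensor_scalar_weight {k n : ℕ} (a b : ℝ) (ha : 0 < a) (hab : a ≤ b)
    (A : Fin n → Matrix (Fin k) (Fin k) ℂ)
    (hAherm : ∀ i, (A i).IsHermitian)
    (hAa : ∀ i, (A i - a • 1).PosSemidef)
    (hAb : ∀ i, ((b • 1 : Matrix (Fin k) (Fin k) ℂ) - A i).PosSemidef)
    (w : Fin n → ℝ) (hw : ∀ i, 0 ≤ w i) :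
    ((((a ^ 2 + b ^ 2) / (2 * a * b)) * (∑ i, w i) ^ 2) •
        (1 : Matrix (Fin k × Fin k) (Fin k × Fin k) ℂ)
      - symKron (∑ i, w i • A i) (∑ i, w i • (A i)⁻¹)).PosSemidef := by
  set c : ℝ := (a ^ 2 + b ^ 2) / (2 * a * b) with hc
  have hpair : ∀ i j : Fin n, ((c • (1 : Matrix (Fin k × Fin k) (Fin k × Fin k) ℂ))
      - (1/2 : ℝ) • (A i ⊗ₖ (A j)⁻¹ + (A i)⁻¹ ⊗ₖ A j)).PosSemidef :=
    fun i j => pair_lemma (hAherm i) (hAherm j) ha hab (hAa i) (hAb i) (hAa j) (hAb j)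
  have hsum : (∑ i : Fin n, ∑ j : Fin n, (w i * w j) •
      ((c • (1 : Matrix (Fin k × Fin k) (Fin k × Fin k) ℂ))
        - (1/2 : ℝ) • (A i ⊗ₖ (A j)⁻¹ + (A i)⁻¹ ⊗ₖ A j))).PosSemidef := by
    refine posSemidef_sum _ _ fun i _ => posSemidef_sum _ _ fun j _ => ?_
    exact posSemidef_rsmul (hpair i j) (mul_nonneg (hw i) (hw j))
  convert hsum using 1
  have hST : (∑ i, w i • A i) ⊗ₖ (∑ i, w i • (A i)⁻¹)
      = ∑ i : Fin n, ∑ j : Fin n, (w i * w j) • (A i ⊗ₖ (A j)⁻¹) := by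
    rw [sum_kron]
    refine Finset.sum_congr rfl fun i _ => ?_
    rw [kron_sum]
    refine Finset.sum_congr rfl fun j _ => ?_
    rw [smul_kronecker, kronecker_smul, smul_smul]
  have hTS : (∑ i, w i • (A i)⁻¹) ⊗ₖ (∑ i, w i • A i)
      = ∑ i : Fin n, ∑ j : Fin n, (w i * w j) • ((A i)⁻¹ ⊗ₖ A j) := by
    rw [sum_kron]
    refine Finset.sum_congr rfl fun i _ => ?_
    rw [kron_sum]
    refine Finset.sum_congr rfl fun j _ => ?_
    rw [smul_kronecker, kronecker_smul, smul_smul]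
  have hOne : (c * (∑ i, w i) ^ 2) • (1 : Matrix (Fin k × Fin k) (Fin k × Fin k) ℂ)
      = ∑ i : Fin n, ∑ j : Fin n, ((w i * w j) * c) •
          (1 : Matrix (Fin k × Fin k) (Fin k × Fin k) ℂ) := by
    simp only [← Finset.sum_smul]
    congr 1
    rw [sq, Finset.sum_mul_sum]
    simp only [Finset.mul_sum]
    refine Finset.sum_congr rfl fun i _ => Finset.sum_congr rfl fun j _ => ?_
    ring
  have hhalf : ((1 : ℂ) / 2) • ((∑ i, w i • A i) ⊗ₖ (∑ i, w i • (A i)⁻¹)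
        + (∑ i, w i • (A i)⁻¹) ⊗ₖ (∑ i, w i • A i))
      = ((1/2 : ℝ)) • ((∑ i, w i • A i) ⊗ₖ (∑ i, w i • (A i)⁻¹)
        + (∑ i, w i • (A i)⁻¹) ⊗ₖ (∑ i, w i • A i)) := by
    rw [real_smul_eqC]
    norm_num
  rw [symKron, hhalf, hST, hTS, hOne]
  simp only [smul_add, Finset.smul_sum, ← Finset.sum_add_distrib, ← Finset.sum_sub_distrib]
  refine Finset.sum_congr rfl fun i _ => Finset.sum_congr rfl fun j _ => ?_
  module
end

section
/- Let f : [0, ∞) → [0, ∞) be a continuous operator monotone and super-multiplicative function. Then for all positive definite k×k complex matrices A, B, C, D, one has (A σ_f C) ⊗ (B σ_f D) ≤ (A ⊗ B) σ_f (C ⊗ D). -/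
open Matrix MeasureTheory
open scoped Kronecker ComplexOrder

attribute [local instance] Matrix.frobeniusNormedAddCommGroup Matrix.frobeniusNormedSpace

/-- The operator connection with representing function `f`:
`X σ_f Y = X^{1/2} f(X^{-1/2} Y X^{-1/2}) X^{1/2}`, where square roots and `f` are taken
via the continuous functional calculus for Hermitian matrices. -/
noncomputable def opConn {m : Type*} [Fintype m] [DecidableEq m] (f : ℝ → ℝ)
    (X Y : Matrix m m ℂ) : Matrix m m ℂ :=
  cfc Real.sqrt X * cfc f ((cfc Real.sqrt X)⁻¹ * Y * (cfc Real.sqrt X)⁻¹) * cfc Real.sqrt X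


namespace OpConnKron

variable {n m : Type*} [Fintype n] [DecidableEq n] [Fintype m] [DecidableEq m]

lemma continuousOn_spectrum (f : ℝ → ℝ) (M : Matrix n n ℂ) :
    ContinuousOn f (spectrum ℝ M) := by
  rw [continuousOn_iff_continuous_restrict]
  fun_prop

lemma star_diag_real (d : n → ℝ) :
    star (diagonal ((RCLike.ofReal : ℝ → ℂ) ∘ d)) = diagonal ((RCLike.ofReal : ℝ → ℂ) ∘ d) := by
  rw [star_eq_conjTranspose, diagonal_conjTranspose, diagonal_eq_diagonal_iff]
  intro i
  simp [Pi.star_def, Function.comp_apply, RCLike.star_def, RCLike.conj_ofReal]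

lemma conj_diag_isSelfAdjoint (W : Matrix n n ℂ) (d : n → ℝ) :
    _root_.IsSelfAdjoint (W * diagonal ((RCLike.ofReal : ℝ → ℂ) ∘ d) * star W) := by
  rw [isSelfAdjoint_iff, StarMul.star_mul, StarMul.star_mul, star_star, star_diag_real, mul_assoc]

lemma cfc_conj_diag (f : ℝ → ℝ) (W : Matrix n n ℂ) (hW : W ∈ unitary (Matrix n n ℂ))
    (d : n → ℝ) :
    cfc f (W * diagonal ((RCLike.ofReal : ℝ → ℂ) ∘ d) * star W)
      = W * diagonal ((RCLike.ofReal : ℝ → ℂ) ∘ f ∘ d) * star W := by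
  have hWs : star W * W = 1 := (Unitary.mem_iff.mp hW).1
  have hWs' : W * star W = 1 := (Unitary.mem_iff.mp hW).2
  have hM : _root_.IsSelfAdjoint (W * diagonal ((RCLike.ofReal : ℝ → ℂ) ∘ d) * star W) :=
    conj_diag_isSelfAdjoint W d
  have key : ∀ {x y : Matrix n n ℂ},
      (W * x * star W) * (W * y * star W) = W * (x * y) * star W := by
    intro x y
    have h : (W * x * star W) * (W * y * star W) = W * (x * (star W * W) * y) * star W := by
      simp only [mul_assoc]
    rw [h, hWs, mul_one]
  have hspec : spectrum ℝ (W * diagonal ((RCLike.ofReal : ℝ → ℂ) ∘ d) * star W)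
      = Set.range d := by
    have h1 : spectrum ℝ (W * diagonal ((RCLike.ofReal : ℝ → ℂ) ∘ d) * star W)
        = spectrum ℝ (diagonal ((RCLike.ofReal : ℝ → ℂ) ∘ d)) := by
      have := Unitary.spectrum_star_right_conjugate (R := ℝ)
        (a := diagonal ((RCLike.ofReal : ℝ → ℂ) ∘ d)) (U := ⟨W, hW⟩)
      simpa using this
    rw [h1]
    ext x
    rw [← spectrum.algebraMap_mem_iff ℂ, spectrum_diagonal]
    simp [RCLike.algebraMap_eq_ofReal, Function.comp, eq_comm]
  have hd : ∀ i, d i ∈ spectrum ℝ (W * diagonal ((RCLike.ofReal : ℝ → ℂ) ∘ d) * star W) := by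
    intro i; rw [hspec]; exact ⟨i, rfl⟩
  set M := W * diagonal ((RCLike.ofReal : ℝ → ℂ) ∘ d) * star W with hMdef
  let e : n → spectrum ℝ M := fun i => ⟨d i, hd i⟩
  let φ : C(spectrum ℝ M, ℝ) →⋆ₐ[ℝ] Matrix n n ℂ :=
  { toFun := fun g => W * diagonal ((RCLike.ofReal : ℝ → ℂ) ∘ g ∘ e) * star W
    map_one' := by
      show W * diagonal ((RCLike.ofReal : ℝ → ℂ) ∘ ⇑(1 : C(spectrum ℝ M, ℝ)) ∘ e) * star W = 1
      have h : ((RCLike.ofReal : ℝ → ℂ) ∘ ⇑(1 : C(spectrum ℝ M, ℝ)) ∘ e) = fun _ => (1 : ℂ) := by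
        funext i; simp
      rw [h]
      simpa [diagonal_one] using hWs'
    map_mul' := fun g h => by
      show W * diagonal ((RCLike.ofReal : ℝ → ℂ) ∘ ⇑(g * h) ∘ e) * star W
          = (W * diagonal ((RCLike.ofReal : ℝ → ℂ) ∘ ⇑g ∘ e) * star W)
            * (W * diagonal ((RCLike.ofReal : ℝ → ℂ) ∘ ⇑h ∘ e) * star W)
      rw [key, diagonal_mul_diagonal]
      congr 2
      rw [diagonal_eq_diagonal_iff]
      intro i
      simp
    map_zero' := by
      show W * diagonal ((RCLike.ofReal : ℝ → ℂ) ∘ ⇑(0 : C(spectrum ℝ M, ℝ)) ∘ e) * star W = 0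
      have h : ((RCLike.ofReal : ℝ → ℂ) ∘ ⇑(0 : C(spectrum ℝ M, ℝ)) ∘ e)
          = fun _ : n => (0 : ℂ) := by
        funext i; simp
      rw [h, diagonal_zero, mul_zero, zero_mul]
    map_add' := fun g h => by
      show W * diagonal ((RCLike.ofReal : ℝ → ℂ) ∘ ⇑(g + h) ∘ e) * star W
          = (W * diagonal ((RCLike.ofReal : ℝ → ℂ) ∘ ⇑g ∘ e) * star W)
            + (W * diagonal ((RCLike.ofReal : ℝ → ℂ) ∘ ⇑h ∘ e) * star W)
      have hsplit : diagonal ((RCLike.ofReal : ℝ → ℂ) ∘ ⇑(g + h) ∘ e)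
          = diagonal ((RCLike.ofReal : ℝ → ℂ) ∘ ⇑g ∘ e)
            + diagonal ((RCLike.ofReal : ℝ → ℂ) ∘ ⇑h ∘ e) := by
        rw [diagonal_add, diagonal_eq_diagonal_iff]
        intro i
        simp
      rw [hsplit, mul_add, add_mul]
    commutes' := fun r => by
      show W * diagonal ((RCLike.ofReal : ℝ → ℂ)
          ∘ ⇑(algebraMap ℝ C(spectrum ℝ M, ℝ) r) ∘ e) * star W = algebraMap ℝ (Matrix n n ℂ) r
      have h : ((RCLike.ofReal : ℝ → ℂ) ∘ ⇑(algebraMap ℝ C(spectrum ℝ M, ℝ) r) ∘ e)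
          = fun _ => (r : ℂ) := by
        funext i
        simp [Algebra.algebraMap_eq_smul_one]
      have h1 : diagonal (fun _ : n => (r : ℂ)) = (r : ℂ) • (1 : Matrix n n ℂ) := by
        ext i j
        by_cases hij : i = j <;> simp [diagonal_apply, hij, Matrix.one_apply]
      rw [h, h1, mul_smul_comm, smul_mul_assoc, mul_one, hWs', algebraMap_eq_diagonal]
      ext i j
      by_cases hij : i = j <;>
        simp [diagonal_apply, hij, Matrix.one_apply, Pi.algebraMap_apply,
          Algebra.algebraMap_eq_smul_one, Complex.real_smul]
    map_star' := fun g => by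
      show W * diagonal ((RCLike.ofReal : ℝ → ℂ) ∘ ⇑(star g) ∘ e) * star W
          = star (W * diagonal ((RCLike.ofReal : ℝ → ℂ) ∘ ⇑g ∘ e) * star W)
      rw [(conj_diag_isSelfAdjoint W (⇑g ∘ e)).star_eq]
      congr 2 }
  have hφcont : Continuous φ := by
    show Continuous fun g : C(spectrum ℝ M, ℝ)
      => W * diagonal ((RCLike.ofReal : ℝ → ℂ) ∘ g ∘ e) * star W
    refine (Continuous.matrix_mul (continuous_const.matrix_mul ?_) continuous_const)
    apply Continuous.matrix_diagonal
    apply continuous_pi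
    intro i
    exact RCLike.continuous_ofReal.comp (continuous_eval_const (e i))
  have hφid : φ (ContinuousMap.restrict _ (ContinuousMap.id ℝ)) = M := rfl
  have h1 := cfcHom_eq_of_continuous_of_map_id hM φ hφcont hφid
  rw [cfc_apply f M hM (continuousOn_spectrum f M), h1]
  rfl

lemma kron_conjTranspose {p q : Type*} (A : Matrix n n ℂ) (B : Matrix p q ℂ) :
    (A ⊗ₖ B)ᴴ = Aᴴ ⊗ₖ Bᴴ := by
  ext ⟨i, j⟩ ⟨k, l⟩
  simp [conjTranspose_apply, star_mul']

lemma kron_mem_unitary {U : Matrix n n ℂ} {V : Matrix m m ℂ}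
    (hU : U ∈ unitary (Matrix n n ℂ)) (hV : V ∈ unitary (Matrix m m ℂ)) :
    U ⊗ₖ V ∈ unitary (Matrix (n × m) (n × m) ℂ) := by
  rw [Unitary.mem_iff] at hU hV ⊢
  have hstar : star (U ⊗ₖ V) = star U ⊗ₖ star V := by
    simp only [star_eq_conjTranspose, kron_conjTranspose]
  constructor
  · rw [hstar, ← mul_kronecker_mul, hU.1, hV.1, one_kronecker_one]
  · rw [hstar, ← mul_kronecker_mul, hU.2, hV.2, one_kronecker_one]

lemma kron_spectral (X : Matrix n n ℂ) (Y : Matrix m m ℂ)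
    (hX : X.IsHermitian) (hY : Y.IsHermitian) :
    X ⊗ₖ Y = (↑hX.eigenvectorUnitary ⊗ₖ ↑hY.eigenvectorUnitary)
      * diagonal ((RCLike.ofReal : ℝ → ℂ) ∘ fun p : n × m =>
          hX.eigenvalues p.1 * hY.eigenvalues p.2)
      * star (↑hX.eigenvectorUnitary ⊗ₖ (↑hY.eigenvectorUnitary : Matrix m m ℂ)) := by
  conv_lhs => rw [hX.spectral_theorem, hY.spectral_theorem, Unitary.conjStarAlgAut_apply,
    Unitary.conjStarAlgAut_apply]
  rw [mul_kronecker_mul, mul_kronecker_mul, diagonal_kronecker_diagonal]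
  congr 2
  · rw [diagonal_eq_diagonal_iff]
    intro p
    simp
  · simp only [star_eq_conjTranspose, kron_conjTranspose]

/-- Key inequality: `f(X) ⊗ f(Y) ≤ f(X ⊗ Y)` for super-multiplicative `f`. -/
lemma cfc_kron_sub_posSemidef (f : ℝ → ℝ)
    (hf_super : ∀ x y : ℝ, 0 ≤ x → 0 ≤ y → f x * f y ≤ f (x * y))
    (X : Matrix n n ℂ) (Y : Matrix m m ℂ) (hX : X.PosSemidef) (hY : Y.PosSemidef) :
    (cfc f (X ⊗ₖ Y) - cfc f X ⊗ₖ cfc f Y).PosSemidef := by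
  have hUu : (↑hX.1.eigenvectorUnitary : Matrix n n ℂ) ∈ unitary (Matrix n n ℂ) :=
    SetLike.coe_mem _
  have hVu : (↑hY.1.eigenvectorUnitary : Matrix m m ℂ) ∈ unitary (Matrix m m ℂ) :=
    SetLike.coe_mem _
  set U : Matrix n n ℂ := ↑hX.1.eigenvectorUnitary
  set V : Matrix m m ℂ := ↑hY.1.eigenvectorUnitary
  set a : n → ℝ := hX.1.eigenvalues
  set b : m → ℝ := hY.1.eigenvalues
  have h1 : cfc f (X ⊗ₖ Y) = (U ⊗ₖ V)
      * diagonal ((RCLike.ofReal : ℝ → ℂ) ∘ f ∘ fun p : n × m => a p.1 * b p.2)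
      * star (U ⊗ₖ V) := by
    rw [kron_spectral X Y hX.1 hY.1]
    exact cfc_conj_diag f (U ⊗ₖ V) (kron_mem_unitary hUu hVu) _
  have h2 : cfc f X = U * diagonal ((RCLike.ofReal : ℝ → ℂ) ∘ f ∘ a) * star U := by
    conv_lhs => rw [hX.1.spectral_theorem]
    exact cfc_conj_diag f U hUu a
  have h3 : cfc f Y = V * diagonal ((RCLike.ofReal : ℝ → ℂ) ∘ f ∘ b) * star V := by
    conv_lhs => rw [hY.1.spectral_theorem]
    exact cfc_conj_diag f V hVu b
  have h4 : cfc f X ⊗ₖ cfc f Y = (U ⊗ₖ V)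
      * diagonal (fun p : n × m => ((f (a p.1) * f (b p.2) : ℝ) : ℂ))
      * star (U ⊗ₖ V) := by
    rw [h2, h3, mul_kronecker_mul, mul_kronecker_mul, diagonal_kronecker_diagonal]
    congr 2
    · funext p
      simp
    · simp only [star_eq_conjTranspose, kron_conjTranspose]
  rw [h1, h4, ← sub_mul, ← mul_sub]
  have hdiag : diagonal ((RCLike.ofReal : ℝ → ℂ) ∘ f ∘ fun p : n × m => a p.1 * b p.2)
      - diagonal (fun p : n × m => ((f (a p.1) * f (b p.2) : ℝ) : ℂ))
      = diagonal (fun p : n × m => ((f (a p.1 * b p.2) - f (a p.1) * f (b p.2) : ℝ) : ℂ)) := by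
    rw [diagonal_sub, diagonal_eq_diagonal_iff]
    intro p
    simp
  rw [hdiag, star_eq_conjTranspose]
  apply PosSemidef.mul_mul_conjTranspose_same
  rw [posSemidef_diagonal_iff]
  intro p
  have ha := hX.eigenvalues_nonneg p.1
  have hb := hY.eigenvalues_nonneg p.2
  have hle : (0:ℝ) ≤ f (a p.1 * b p.2) - f (a p.1) * f (b p.2) :=
    sub_nonneg.mpr (hf_super _ _ ha hb)
  exact Complex.zero_le_real.mpr hle

lemma cfc_sqrt_kron (A : Matrix n n ℂ) (B : Matrix m m ℂ)
    (hA : A.PosSemidef) (hB : B.PosSemidef) :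
    cfc Real.sqrt (A ⊗ₖ B) = cfc Real.sqrt A ⊗ₖ cfc Real.sqrt B := by
  have hUu : (↑hA.1.eigenvectorUnitary : Matrix n n ℂ) ∈ unitary (Matrix n n ℂ) :=
    SetLike.coe_mem _
  have hVu : (↑hB.1.eigenvectorUnitary : Matrix m m ℂ) ∈ unitary (Matrix m m ℂ) :=
    SetLike.coe_mem _
  set U : Matrix n n ℂ := ↑hA.1.eigenvectorUnitary
  set V : Matrix m m ℂ := ↑hB.1.eigenvectorUnitary
  set a : n → ℝ := hA.1.eigenvalues
  set b : m → ℝ := hB.1.eigenvalues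
  have h1 : cfc Real.sqrt (A ⊗ₖ B) = (U ⊗ₖ V)
      * diagonal ((RCLike.ofReal : ℝ → ℂ) ∘ Real.sqrt ∘ fun p : n × m => a p.1 * b p.2)
      * star (U ⊗ₖ V) := by
    rw [kron_spectral A B hA.1 hB.1]
    exact cfc_conj_diag Real.sqrt (U ⊗ₖ V) (kron_mem_unitary hUu hVu) _
  have h2 : cfc Real.sqrt A
      = U * diagonal ((RCLike.ofReal : ℝ → ℂ) ∘ Real.sqrt ∘ a) * star U := by
    conv_lhs => rw [hA.1.spectral_theorem]
    exact cfc_conj_diag Real.sqrt U hUu a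
  have h3 : cfc Real.sqrt B
      = V * diagonal ((RCLike.ofReal : ℝ → ℂ) ∘ Real.sqrt ∘ b) * star V := by
    conv_lhs => rw [hB.1.spectral_theorem]
    exact cfc_conj_diag Real.sqrt V hVu b
  rw [h1, h2, h3, mul_kronecker_mul, mul_kronecker_mul, diagonal_kronecker_diagonal]
  congr 2
  · rw [diagonal_eq_diagonal_iff]
    intro p
    have hs : √(a p.1 * b p.2) = √(a p.1) * √(b p.2) := Real.sqrt_mul (hA.eigenvalues_nonneg p.1) _
    simp [hs]
  · simp only [star_eq_conjTranspose, kron_conjTranspose]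

lemma cfc_isHermitian (f : ℝ → ℝ) (M : Matrix n n ℂ) (hM : M.IsHermitian) :
    (cfc f M).IsHermitian := by
  rw [hM.cfc_eq, Matrix.IsHermitian.cfc]
  have := conj_diag_isSelfAdjoint (↑hM.eigenvectorUnitary : Matrix n n ℂ) (f ∘ hM.eigenvalues)
  rw [isSelfAdjoint_iff, star_eq_conjTranspose] at this
  exact this

end OpConnKron

/-- Intermediate step in Lemma 4.3: for an operator monotone, super-multiplicative representing
function `f` and positive definite matrices `A, B, C, D`,
`(A σ_f C) ⊗ (B σ_f D) ≤ (A ⊗ B) σ_f (C ⊗ D)`. -/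
theorem opConn_kron_le {k : ℕ} (f : ℝ → ℝ)
    (hf_cont : ContinuousOn f (Set.Ici 0))
    (hf_nonneg : ∀ x : ℝ, 0 ≤ x → 0 ≤ f x)
    (hf_mono : ∀ (m : ℕ) (X Y : Matrix (Fin m) (Fin m) ℂ), X.PosSemidef → Y.PosSemidef →
      (Y - X).PosSemidef → (cfc f Y - cfc f X).PosSemidef)
    (hf_super : ∀ x y : ℝ, 0 ≤ x → 0 ≤ y → f x * f y ≤ f (x * y))
    (A B C D : Matrix (Fin k) (Fin k) ℂ)
    (hA : A.PosDef) (hB : B.PosDef) (hC : C.PosDef) (hD : D.PosDef) :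
    (opConn f (A ⊗ₖ B) (C ⊗ₖ D)
      - (opConn f A C) ⊗ₖ (opConn f B D)).PosSemidef := by
  have hC' : ((cfc Real.sqrt A)⁻¹ * C * (cfc Real.sqrt A)⁻¹).PosSemidef := by
    have hherm : ((cfc Real.sqrt A)⁻¹).IsHermitian :=
      (OpConnKron.cfc_isHermitian Real.sqrt A hA.1).inv
    have := hC.posSemidef.mul_mul_conjTranspose_same (cfc Real.sqrt A)⁻¹
    rwa [hherm.eq] at this
  have hD' : ((cfc Real.sqrt B)⁻¹ * D * (cfc Real.sqrt B)⁻¹).PosSemidef := by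
    have hherm : ((cfc Real.sqrt B)⁻¹).IsHermitian :=
      (OpConnKron.cfc_isHermitian Real.sqrt B hB.1).inv
    have := hD.posSemidef.mul_mul_conjTranspose_same (cfc Real.sqrt B)⁻¹
    rwa [hherm.eq] at this
  have hWh : (cfc Real.sqrt A ⊗ₖ cfc Real.sqrt B).IsHermitian := by
    show (cfc Real.sqrt A ⊗ₖ cfc Real.sqrt B)ᴴ = cfc Real.sqrt A ⊗ₖ cfc Real.sqrt B
    rw [OpConnKron.kron_conjTranspose, (OpConnKron.cfc_isHermitian Real.sqrt A hA.1).eq,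
      (OpConnKron.cfc_isHermitian Real.sqrt B hB.1).eq]
  have hL : opConn f (A ⊗ₖ B) (C ⊗ₖ D)
      = (cfc Real.sqrt A ⊗ₖ cfc Real.sqrt B)
        * cfc f (((cfc Real.sqrt A)⁻¹ * C * (cfc Real.sqrt A)⁻¹)
            ⊗ₖ ((cfc Real.sqrt B)⁻¹ * D * (cfc Real.sqrt B)⁻¹))
        * (cfc Real.sqrt A ⊗ₖ cfc Real.sqrt B) := by
    unfold opConn
    rw [OpConnKron.cfc_sqrt_kron A B hA.posSemidef hB.posSemidef, inv_kronecker,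
      ← mul_kronecker_mul, ← mul_kronecker_mul]
  have hR : opConn f A C ⊗ₖ opConn f B D
      = (cfc Real.sqrt A ⊗ₖ cfc Real.sqrt B)
        * (cfc f ((cfc Real.sqrt A)⁻¹ * C * (cfc Real.sqrt A)⁻¹)
            ⊗ₖ cfc f ((cfc Real.sqrt B)⁻¹ * D * (cfc Real.sqrt B)⁻¹))
        * (cfc Real.sqrt A ⊗ₖ cfc Real.sqrt B) := by
    unfold opConn
    rw [mul_kronecker_mul, mul_kronecker_mul]
  rw [hL, hR, ← sub_mul, ← mul_sub]
  have hkey := (OpConnKron.cfc_kron_sub_posSemidef f hf_super _ _ hC' hD').mul_mul_conjTranspose_same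
    (cfc Real.sqrt A ⊗ₖ cfc Real.sqrt B)
  rwa [hWh.eq] at hkey
end

section
/- Assume the field hypotheses (weights not needed). Let f be a continuous real-valued function defined on [a, b] ∪ [1/b, 1/a] such that f(x)·f(1/x) ≤ 1 for all x ∈ [a, b], with f([a, b]) ⊆ [a, b] or f([a, b]) ⊆ [1/b, 1/a], and let g : [a, b] → [0, ∞) be continuous. Then (∫_Ω f(A_t) g(A_t) dμ(t)) ⊗_s (∫_Ω f(A_t⁻¹) g(A_t) dμ(t)) ≤ ((a² + b²)/(2ab)) · (∫_Ω g(A_t) dμ(t))^{⊗2}, where f(A_t), f(A_t⁻¹) and g(A_t) are defined by the functional calculus for Hermitian matrices. -/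
open Matrix MeasureTheory
open scoped Kronecker ComplexOrder

attribute [local instance] Matrix.frobeniusNormedAddCommGroup Matrix.frobeniusNormedSpace

lemma KIT_scalar_key {a b : ℝ} (ha : 0 < a) (hab : a ≤ b) (f g : ℝ → ℝ)
    (hf_one : ∀ x ∈ Set.Icc a b, f x * f (1 / x) ≤ 1)
    (hf_maps : Set.MapsTo f (Set.Icc a b) (Set.Icc a b) ∨
      Set.MapsTo f (Set.Icc a b) (Set.Icc (1 / b) (1 / a)))
    (hg_nonneg : ∀ x ∈ Set.Icc a b, 0 ≤ g x) :
    ∀ x ∈ Set.Icc a b, ∀ y ∈ Set.Icc a b,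
      0 ≤ ((a ^ 2 + b ^ 2) / (2 * a * b)) * (g x * g y)
        - (1 / 2) * ((f x * g x) * (f y⁻¹ * g y) + (f x⁻¹ * g x) * (f y * g y)) := by
  intro x hx y hy
  have hb : 0 < b := lt_of_lt_of_le ha hab
  -- positivity and ratio facts about f x and f y
  have key : 0 < f x ∧ 0 < f y ∧ a * f y ≤ b * f x ∧ a * f x ≤ b * f y := by
    rcases hf_maps with hm | hm
    · obtain ⟨h1, h2⟩ := hm hx
      obtain ⟨h3, h4⟩ := hm hy
      refine ⟨lt_of_lt_of_le ha h1, lt_of_lt_of_le ha h3, ?_, ?_⟩ <;> nlinarith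
    · obtain ⟨h1, h2⟩ := hm hx
      obtain ⟨h3, h4⟩ := hm hy
      have hb' : 0 < 1 / b := by positivity
      have e1 : a * (1 / a) = 1 := by field_simp
      have e2 : b * (1 / b) = 1 := by field_simp
      refine ⟨lt_of_lt_of_le hb' h1, lt_of_lt_of_le hb' h3, ?_, ?_⟩
      · nlinarith [mul_le_mul_of_nonneg_left h4 ha.le, mul_le_mul_of_nonneg_left h1 hb.le]
      · nlinarith [mul_le_mul_of_nonneg_left h2 ha.le, mul_le_mul_of_nonneg_left h3 hb.le]
  obtain ⟨hpx, hpy, k1, k2⟩ := key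
  have hinvx : f x⁻¹ ≤ 1 / f x := by
    have := hf_one x hx
    rw [one_div x] at this
    rw [le_div_iff₀ hpx]
    nlinarith
  have hinvy : f y⁻¹ ≤ 1 / f y := by
    have := hf_one y hy
    rw [one_div y] at this
    rw [le_div_iff₀ hpy]
    nlinarith
  have h2 : f x * f y⁻¹ ≤ f x * (1 / f y) := mul_le_mul_of_nonneg_left hinvy hpx.le
  have h4 : f x⁻¹ * f y ≤ (1 / f x) * f y := mul_le_mul_of_nonneg_right hinvx hpy.le
  have h5 : f x * (1 / f y) + (1 / f x) * f y ≤ (a ^ 2 + b ^ 2) / (a * b) := by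
    rw [mul_one_div, one_div_mul_eq_div, div_add_div _ _ (ne_of_gt hpy) (ne_of_gt hpx),
      div_le_div_iff₀ (by positivity) (by positivity)]
    nlinarith [mul_nonneg (sub_nonneg.2 k1) (sub_nonneg.2 k2), mul_pos hpx hpy, mul_pos ha hb]
  have hS : f x * f y⁻¹ + f x⁻¹ * f y ≤ (a ^ 2 + b ^ 2) / (a * b) := by linarith
  have hgx := hg_nonneg x hx
  have hgy := hg_nonneg y hy
  have hgg : 0 ≤ g x * g y := mul_nonneg hgx hgy
  have h2K : (a ^ 2 + b ^ 2) / (a * b) = 2 * ((a ^ 2 + b ^ 2) / (2 * a * b)) := by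
    field_simp
  have := mul_le_mul_of_nonneg_left hS hgg
  rw [h2K] at this
  nlinarith

lemma KIT_contOn_spectrum {k : ℕ} (φ : ℝ → ℝ) (X : Matrix (Fin k) (Fin k) ℂ) :
    ContinuousOn φ (spectrum ℝ X) :=
  (Matrix.finite_real_spectrum (A := X)).continuousOn _

lemma KIT_eig_mem {k : ℕ} {a b : ℝ} {X : Matrix (Fin k) (Fin k) ℂ} (hX : X.IsHermitian)
    (h1 : (X - a • 1).PosSemidef) (h2 : ((b • 1 : Matrix (Fin k) (Fin k) ℂ) - X).PosSemidef)
    (i : Fin k) : hX.eigenvalues i ∈ Set.Icc a b := by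
  set v : Fin k → ℂ := ⇑(hX.eigenvectorBasis i) with hv
  have hnorm : star v ⬝ᵥ v = 1 := by
    have h := hX.eigenvectorBasis.orthonormal.1 i
    have h2 : (inner ℂ (hX.eigenvectorBasis i) (hX.eigenvectorBasis i) : ℂ) = 1 := by
      rw [inner_self_eq_norm_sq_to_K, h]; norm_num
    rw [EuclideanSpace.inner_eq_star_dotProduct, dotProduct_comm] at h2; exact h2
  have hmul : X *ᵥ v = (hX.eigenvalues i : ℂ) • v := by
    have h3 := hX.mulVec_eigenvectorBasis i
    rw [hv, h3]
    ext l
    simp [Complex.real_smul]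
  constructor
  · have h0 := h1.dotProduct_mulVec_nonneg v
    rw [Matrix.sub_mulVec, Matrix.smul_mulVec, Matrix.one_mulVec, dotProduct_sub,
      dotProduct_smul, hmul, dotProduct_smul, hnorm] at h0
    have : (0 : ℂ) ≤ ((hX.eigenvalues i - a : ℝ) : ℂ) := by
      push_cast
      convert h0 using 1
      simp [Complex.real_smul]
    rw [Complex.zero_le_real] at this
    linarith
  · have h0 := h2.dotProduct_mulVec_nonneg v
    rw [Matrix.sub_mulVec, Matrix.smul_mulVec, Matrix.one_mulVec, dotProduct_sub,
      dotProduct_smul, hmul, dotProduct_smul, hnorm] at h0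
    have : (0 : ℂ) ≤ ((b - hX.eigenvalues i : ℝ) : ℂ) := by
      push_cast
      convert h0 using 1
      simp [Complex.real_smul]
    rw [Complex.zero_le_real] at this
    linarith

section CLM
variable {ι κ : Type*} [Fintype ι] [Fintype κ]

/-- entry evaluation as a CLM -/
noncomputable def KIT_entryCLM (i j : ι) : Matrix ι ι ℂ →L[ℂ] ℂ :=
  LinearMap.toContinuousLinearMap
    { toFun := fun X => X i j
      map_add' := fun _ _ => rfl
      map_smul' := fun _ _ => rfl }

@[simp] lemma KIT_entryCLM_apply (i j : ι) (X : Matrix ι ι ℂ) : KIT_entryCLM i j X = X i j := rfl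

/-- quadratic form as a CLM -/
noncomputable def KIT_qfCLM (v : ι → ℂ) : Matrix ι ι ℂ →L[ℂ] ℂ :=
  LinearMap.toContinuousLinearMap
    { toFun := fun X => star v ⬝ᵥ X *ᵥ v
      map_add' := fun X Y => by simp [Matrix.add_mulVec, dotProduct_add]
      map_smul' := fun c X => by simp [Matrix.smul_mulVec, dotProduct_smul] }

@[simp] lemma KIT_qfCLM_apply (v : ι → ℂ) (X : Matrix ι ι ℂ) :
    KIT_qfCLM v X = star v ⬝ᵥ X *ᵥ v := rfl

/-- right Kronecker multiplication as a CLM -/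
noncomputable def KIT_kronR {k : ℕ} (C : Matrix (Fin k) (Fin k) ℂ) :
    Matrix (Fin k) (Fin k) ℂ →L[ℂ] Matrix (Fin k × Fin k) (Fin k × Fin k) ℂ :=
  LinearMap.toContinuousLinearMap
    { toFun := fun X => X ⊗ₖ C
      map_add' := fun X Y => Matrix.add_kronecker X Y C
      map_smul' := fun c X => Matrix.smul_kronecker c X C }

@[simp] lemma KIT_kronR_apply {k : ℕ} (C X : Matrix (Fin k) (Fin k) ℂ) :
    KIT_kronR C X = X ⊗ₖ C := rfl

/-- left Kronecker multiplication as a CLM -/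
noncomputable def KIT_kronL {k : ℕ} (C : Matrix (Fin k) (Fin k) ℂ) :
    Matrix (Fin k) (Fin k) ℂ →L[ℂ] Matrix (Fin k × Fin k) (Fin k × Fin k) ℂ :=
  LinearMap.toContinuousLinearMap
    { toFun := fun X => C ⊗ₖ X
      map_add' := fun X Y => Matrix.kronecker_add C X Y
      map_smul' := fun c X => Matrix.kronecker_smul c C X }

@[simp] lemma KIT_kronL_apply {k : ℕ} (C X : Matrix (Fin k) (Fin k) ℂ) :
    KIT_kronL C X = C ⊗ₖ X := rfl

end CLM

noncomputable instance KIT_cenorm {m n : Type*} [Fintype m] [Fintype n] : ContinuousENorm (Matrix m n ℂ) :=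
  @SeminormedAddGroup.toContinuousENorm (Matrix m n ℂ) _

instance KIT_pmetr {m n : Type*} [Fintype m] [Fintype n] :
    TopologicalSpace.PseudoMetrizableSpace (Matrix m n ℂ) :=
  inferInstanceAs (TopologicalSpace.PseudoMetrizableSpace (m → n → ℂ))

lemma KIT_psd_integral {ι : Type*} [Fintype ι] {Ω : Type*} [MeasurableSpace Ω] {μ : Measure Ω}
    {h : Ω → Matrix ι ι ℂ} (hint : Integrable h μ) (hpsd : ∀ t, (h t).PosSemidef) :
    (∫ t, h t ∂μ).PosSemidef := by
  have hentry : ∀ i j, (∫ t, h t ∂μ) i j = ∫ t, h t i j ∂μ := fun i j =>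
    ((KIT_entryCLM i j).integral_comp_comm hint).symm
  rw [Matrix.posSemidef_iff_dotProduct_mulVec]
  constructor
  · ext i j
    rw [Matrix.conjTranspose_apply, hentry, hentry,
      show (star (∫ t, h t j i ∂μ)) = (starRingEnd ℂ) (∫ t, h t j i ∂μ) from rfl, ← integral_conj]
    refine integral_congr_ae (Filter.Eventually.of_forall fun t => ?_)
    show (starRingEnd ℂ) (h t j i) = h t i j
    conv_rhs => rw [← (hpsd t).1.eq]
    simp [Matrix.conjTranspose_apply]
  · intro v
    have hq : star v ⬝ᵥ (∫ t, h t ∂μ) *ᵥ v = ∫ t, star v ⬝ᵥ (h t) *ᵥ v ∂μ :=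
      ((KIT_qfCLM v).integral_comp_comm hint).symm
    rw [hq]
    have hzint : Integrable (fun t => star v ⬝ᵥ h t *ᵥ v) μ :=
      (KIT_qfCLM v).integrable_comp hint
    have hre0 : ∀ t, 0 ≤ (star v ⬝ᵥ h t *ᵥ v).re := fun t => by
      simpa using (Complex.le_def.1 ((hpsd t).dotProduct_mulVec_nonneg v)).1
    have him0 : ∀ t, (star v ⬝ᵥ h t *ᵥ v).im = 0 := fun t => by
      simpa using (Complex.le_def.1 ((hpsd t).dotProduct_mulVec_nonneg v)).2.symm
    rw [Complex.le_def]
    have hR := integral_re hzint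
    have hI := integral_im hzint
    simp only [RCLike.re_eq_complex_re, RCLike.im_eq_complex_im] at hR hI
    constructor
    · rw [Complex.zero_re, ← hR]
      exact integral_nonneg hre0
    · rw [Complex.zero_im, ← hI]
      rw [integral_congr_ae (Filter.Eventually.of_forall him0)]
      simp

lemma KIT_kron_conjTranspose {k : ℕ} (U V : Matrix (Fin k) (Fin k) ℂ) :
    (U ⊗ₖ V)ᴴ = Uᴴ ⊗ₖ Vᴴ := by
  ext p q
  simp [Matrix.conjTranspose_apply, Matrix.kroneckerMap_apply, mul_comm]

lemma KIT_norm_UdU_le {k : ℕ} {U : Matrix (Fin k) (Fin k) ℂ} (hU : U * Uᴴ = 1)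
    (d : Fin k → ℂ) {c : ℝ} (hc : 0 ≤ c) (hd : ∀ l, ‖d l‖ ≤ c) :
    ‖U * Matrix.diagonal d * Uᴴ‖ ≤ k * c := by
  have hrow : ∀ i : Fin k, ∑ l, ‖U i l‖ ^ 2 = 1 := by
    intro i
    have h0 := congrFun (congrFun hU i) i
    rw [Matrix.mul_apply, Matrix.one_apply_eq] at h0
    have he : ∀ l, U i l * Uᴴ l i = ((‖U i l‖ ^ 2 : ℝ) : ℂ) := fun l => by
      rw [Matrix.conjTranspose_apply, show (star (U i l)) = (starRingEnd ℂ) (U i l) from rfl,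
        RCLike.mul_conj]
      norm_num
    rw [Finset.sum_congr rfl (fun l _ => he l)] at h0
    exact_mod_cast h0
  have hCS : ∀ i j : Fin k, ∑ l, ‖U i l‖ * ‖U j l‖ ≤ 1 := by
    intro i j
    have h1 := Finset.sum_mul_sq_le_sq_mul_sq Finset.univ (fun l => ‖U i l‖) (fun l => ‖U j l‖)
    rw [hrow i, hrow j] at h1
    have h2 : 0 ≤ ∑ l, ‖U i l‖ * ‖U j l‖ :=
      Finset.sum_nonneg fun l _ => mul_nonneg (norm_nonneg _) (norm_nonneg _)
    nlinarith
  have hentry : ∀ i j, ‖(U * Matrix.diagonal d * Uᴴ) i j‖ ≤ c := by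
    intro i j
    have he : (U * Matrix.diagonal d * Uᴴ) i j = ∑ l, U i l * d l * Uᴴ l j := by
      rw [Matrix.mul_apply]
      exact Finset.sum_congr rfl fun l _ => by rw [Matrix.mul_diagonal]
    rw [he]
    refine le_trans (norm_sum_le _ _) ?_
    have hb : ∀ l, ‖U i l * d l * Uᴴ l j‖ ≤ c * (‖U i l‖ * ‖U j l‖) := by
      intro l
      rw [norm_mul, norm_mul, Matrix.conjTranspose_apply, norm_star]
      have := mul_le_mul_of_nonneg_left (hd l) (norm_nonneg (U i l))
      nlinarith [norm_nonneg (U i l), norm_nonneg (U j l), hd l, mul_nonneg (norm_nonneg (U i l)) (norm_nonneg (U j l))]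
    refine le_trans (Finset.sum_le_sum fun l _ => hb l) ?_
    rw [← Finset.mul_sum]
    calc c * ∑ l, ‖U i l‖ * ‖U j l‖ ≤ c * 1 := mul_le_mul_of_nonneg_left (hCS i j) hc
    _ = c := mul_one c
  -- Frobenius norm bound
  rw [Matrix.frobenius_norm_def]
  have hsum : (∑ i, ∑ j, ‖(U * Matrix.diagonal d * Uᴴ) i j‖ ^ (2 : ℝ)) ≤ (k * c) ^ 2 := by
    have hb : ∀ i j : Fin k, ‖(U * Matrix.diagonal d * Uᴴ) i j‖ ^ (2 : ℝ) ≤ c ^ 2 := by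
      intro i j
      rw [Real.rpow_two]
      exact pow_le_pow_left₀ (norm_nonneg _) (hentry i j) 2
    calc (∑ i, ∑ j, ‖(U * Matrix.diagonal d * Uᴴ) i j‖ ^ (2 : ℝ))
        ≤ ∑ _i : Fin k, ∑ _j : Fin k, c ^ 2 :=
          Finset.sum_le_sum fun i _ => Finset.sum_le_sum fun j _ => hb i j
      _ = k ^ 2 * c ^ 2 := by simp [Finset.sum_const]; ring
      _ = (k * c) ^ 2 := by ring
  have h1 : (∑ i, ∑ j, ‖(U * Matrix.diagonal d * Uᴴ) i j‖ ^ (2 : ℝ)) ^ (1 / 2 : ℝ)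
      ≤ ((k * c) ^ 2) ^ (1 / 2 : ℝ) := by
    refine Real.rpow_le_rpow ?_ hsum (by norm_num)
    exact Finset.sum_nonneg fun i _ => Finset.sum_nonneg fun j _ => Real.rpow_nonneg (norm_nonneg _) _
  refine le_trans h1 ?_
  rw [← Real.rpow_natCast (k * c) 2, ← Real.rpow_mul (by positivity)]
  norm_num

lemma KIT_cfc_form {k : ℕ} {X : Matrix (Fin k) (Fin k) ℂ} (hX : X.IsHermitian) (φ : ℝ → ℝ) :
    cfc φ X = (hX.eigenvectorUnitary : Matrix (Fin k) (Fin k) ℂ) *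
        Matrix.diagonal (fun l => ((φ (hX.eigenvalues l) : ℝ) : ℂ)) *
        (hX.eigenvectorUnitary : Matrix (Fin k) (Fin k) ℂ)ᴴ := by
  rw [hX.cfc_eq, Matrix.IsHermitian.cfc, Unitary.conjStarAlgAut_apply, Matrix.star_eq_conjTranspose]
  rfl

lemma KIT_collect {n : Type*} [Fintype n] (W D1 D2 D3 : Matrix n n ℂ) (K : ℝ) :
    K • (W * D1 * Wᴴ) - ((1 : ℂ) / 2) • (W * D2 * Wᴴ + W * D3 * Wᴴ)
      = W * (K • D1 - ((1 : ℂ) / 2) • (D2 + D3)) * Wᴴ := by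
  simp only [Matrix.mul_sub, Matrix.sub_mul, Matrix.mul_add, Matrix.add_mul,
    Matrix.mul_smul, Matrix.smul_mul]

lemma KIT_pointwise_psd {k : ℕ} {a b : ℝ} (K : ℝ) (g F Ft : ℝ → ℝ)
    (hd : ∀ x ∈ Set.Icc a b, ∀ y ∈ Set.Icc a b,
      0 ≤ K * (g x * g y) - (1 / 2) * (F x * Ft y + Ft x * F y))
    {X Y : Matrix (Fin k) (Fin k) ℂ} (hX : X.IsHermitian) (hY : Y.IsHermitian)
    (hXe : ∀ i, hX.eigenvalues i ∈ Set.Icc a b) (hYe : ∀ i, hY.eigenvalues i ∈ Set.Icc a b) :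
    (K • (cfc g X ⊗ₖ cfc g Y)
      - ((1 : ℂ) / 2) • (cfc F X ⊗ₖ cfc Ft Y + cfc Ft X ⊗ₖ cfc F Y)).PosSemidef := by
  set U := (hX.eigenvectorUnitary : Matrix (Fin k) (Fin k) ℂ) with hU
  set V := (hY.eigenvectorUnitary : Matrix (Fin k) (Fin k) ℂ) with hV
  have hkron : ∀ φ ψ : ℝ → ℝ, cfc φ X ⊗ₖ cfc ψ Y =
      (U ⊗ₖ V) * Matrix.diagonal (fun p : Fin k × Fin k =>
        ((φ (hX.eigenvalues p.1) * ψ (hY.eigenvalues p.2) : ℝ) : ℂ)) * (U ⊗ₖ V)ᴴ := by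
    intro φ ψ
    rw [KIT_cfc_form hX φ, KIT_cfc_form hY ψ, Matrix.mul_kronecker_mul, Matrix.mul_kronecker_mul,
      Matrix.diagonal_kronecker_diagonal, KIT_kron_conjTranspose]
    congr 2
    funext p
    push_cast
    rfl
  rw [hkron g g, hkron F Ft, hkron Ft F, KIT_collect]
  rw [Matrix.diagonal_add, ← Matrix.diagonal_smul, ← Matrix.diagonal_smul, Matrix.diagonal_sub]
  refine (Matrix.posSemidef_diagonal_iff.2 fun p => ?_).mul_mul_conjTranspose_same _
  have h0 := hd _ (hXe p.1) _ (hYe p.2)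
  simp only [Pi.sub_apply, Pi.smul_apply, Pi.add_apply, Complex.real_smul, smul_eq_mul]
  rw [show ((1 : ℂ) / 2) = (((1 : ℝ) / 2 : ℝ) : ℂ) by norm_num, ← Complex.ofReal_add,
    ← Complex.ofReal_mul, ← Complex.ofReal_mul, ← Complex.ofReal_sub, Complex.zero_le_real]
  exact h0

lemma KIT_UUH {k : ℕ} {X : Matrix (Fin k) (Fin k) ℂ} (hX : X.IsHermitian) :
    (hX.eigenvectorUnitary : Matrix (Fin k) (Fin k) ℂ) *
      (hX.eigenvectorUnitary : Matrix (Fin k) (Fin k) ℂ)ᴴ = 1 := by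
  have hm := Matrix.mem_unitaryGroup_iff.mp hX.eigenvectorUnitary.2
  rwa [Matrix.star_eq_conjTranspose] at hm

lemma KIT_integrable_cfc {k : ℕ} {Ω : Type*} [MeasurableSpace Ω] (μ : Measure Ω)
    [IsFiniteMeasure μ] {a b : ℝ} (A : Ω → Matrix (Fin k) (Fin k) ℂ)
    (hAmeas : AEStronglyMeasurable A μ) (hAherm : ∀ t, (A t).IsHermitian)
    (heig : ∀ t i, (hAherm t).eigenvalues i ∈ Set.Icc a b)
    (φ : ℝ → ℝ) (hφ : ContinuousOn φ (Set.Icc a b)) :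
    Integrable (fun t => cfc φ (A t)) μ := by
  obtain ⟨C, hC⟩ : ∃ C, ∀ x ∈ Set.Icc a b, ‖φ x‖ ≤ C :=
    isCompact_Icc.exists_bound_of_continuousOn hφ
  set c := max C 0 with hcdef
  have hc : 0 ≤ c := le_max_right _ _
  have hbound : ∀ t, ‖cfc φ (A t)‖ ≤ k * c := by
    intro t
    rw [KIT_cfc_form (hAherm t) φ]
    refine KIT_norm_UdU_le (KIT_UUH (hAherm t)) _ hc fun l => ?_
    rw [Complex.norm_real]
    exact le_trans (hC _ (heig t l)) (le_max_left _ _)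
  have haesm : AEStronglyMeasurable (fun t => cfc φ (A t)) μ := by
    have hpoly : ∀ n : ℕ, ∃ q : Polynomial ℝ,
        ∀ x ∈ Set.Icc a b, |q.eval x - φ x| < 1 / ((n : ℝ) + 1) := fun n =>
      exists_polynomial_near_of_continuousOn a b φ hφ _ (by positivity)
    choose q hq using hpoly
    have hcontm : ∀ n, Continuous fun B : Matrix (Fin k) (Fin k) ℂ =>
        (Polynomial.aeval B (q n) : Matrix (Fin k) (Fin k) ℂ) := by
      intro n
      rw [show (fun B : Matrix (Fin k) (Fin k) ℂ => (Polynomial.aeval B (q n) : Matrix (Fin k) (Fin k) ℂ))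
          = fun B : Matrix (Fin k) (Fin k) ℂ =>
            ∑ i ∈ Finset.range ((q n).natDegree + 1), (q n).coeff i • B ^ i from
        funext fun B => Polynomial.aeval_eq_sum_range _]
      exact continuous_finset_sum _ fun i _ => (continuous_pow i).const_smul ((q n).coeff i)
    have hmeas : ∀ n, AEStronglyMeasurable
        (fun t => (Polynomial.aeval (A t) (q n) : Matrix (Fin k) (Fin k) ℂ)) μ :=
      fun n => (hcontm n).comp_aestronglyMeasurable hAmeas
    refine aestronglyMeasurable_of_tendsto_ae Filter.atTop hmeas
      (Filter.Eventually.of_forall fun t => ?_)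
    rw [← tendsto_sub_nhds_zero_iff]
    have hbnd : ∀ n : ℕ, ‖(Polynomial.aeval (A t) (q n) : Matrix (Fin k) (Fin k) ℂ)
        - cfc φ (A t)‖ ≤ k * (1 / ((n : ℝ) + 1)) := by
      intro n
      have e1 : (Polynomial.aeval (A t) (q n) : Matrix (Fin k) (Fin k) ℂ)
          = cfc (fun x => (q n).eval x) (A t) := (cfc_polynomial (q n) (A t) (hAherm t)).symm
      rw [e1, KIT_cfc_form (hAherm t), KIT_cfc_form (hAherm t), ← Matrix.sub_mul, ← Matrix.mul_sub,
        Matrix.diagonal_sub]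
      refine KIT_norm_UdU_le (KIT_UUH (hAherm t)) _ (by positivity) fun l => ?_
      rw [← Complex.ofReal_sub, Complex.norm_real]
      exact le_of_lt (hq n _ (heig t l))
    refine squeeze_zero_norm hbnd ?_
    have h0 := tendsto_one_div_add_atTop_nhds_zero_nat.const_mul (k : ℝ)
    simpa using h0
  exact Integrable.mono' (integrable_const ((k : ℝ) * c)) haesm
    (Filter.Eventually.of_forall hbound)

lemma KIT_cfc_mul {k : ℕ} {X : Matrix (Fin k) (Fin k) ℂ} (hX : X.IsHermitian) (φ ψ : ℝ → ℝ) :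
    cfc φ X * cfc ψ X = cfc (fun x => φ x * ψ x) X :=
  (cfc_mul φ ψ X (KIT_contOn_spectrum φ X) (KIT_contOn_spectrum ψ X)).symm

lemma KIT_isUnit {k : ℕ} {a b : ℝ} (ha : 0 < a) {X : Matrix (Fin k) (Fin k) ℂ}
    (hX : X.IsHermitian) (heig : ∀ i, hX.eigenvalues i ∈ Set.Icc a b) : IsUnit X := by
  rw [Matrix.isUnit_iff_isUnit_det, hX.det_eq_prod_eigenvalues, isUnit_iff_ne_zero]
  refine Finset.prod_ne_zero_iff.2 fun i _ => ?_
  have h0 : hX.eigenvalues i ≠ 0 := ne_of_gt (lt_of_lt_of_le ha (heig i).1)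
  exact Complex.ofReal_ne_zero.mpr h0

lemma KIT_cfc_inv {k : ℕ} {X : Matrix (Fin k) (Fin k) ℂ} (hX : X.IsHermitian)
    (hu : IsUnit X) (φ : ℝ → ℝ) : cfc φ X⁻¹ = cfc (fun x => φ x⁻¹) X := by
  obtain ⟨u, rfl⟩ := hu
  have hsa : IsSelfAdjoint (u : Matrix (Fin k) (Fin k) ℂ) := hX
  have h1 : cfc (fun x : ℝ => x⁻¹) (u : Matrix (Fin k) (Fin k) ℂ) = ↑u⁻¹ :=
    cfc_inv_id (R := ℝ) u hsa
  rw [show ((u : Matrix (Fin k) (Fin k) ℂ))⁻¹ = ((u⁻¹ : (Matrix (Fin k) (Fin k) ℂ)ˣ) :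
      Matrix (Fin k) (Fin k) ℂ) from (Matrix.coe_units_inv u).symm, ← h1,
    ← cfc_comp' φ (fun x : ℝ => x⁻¹) (u : Matrix (Fin k) (Fin k) ℂ)
      ((Matrix.finite_real_spectrum.image _).continuousOn _)
      (Matrix.finite_real_spectrum.continuousOn _) hsa]

/-- Corollary 5.2: for `f` as in Theorem 5.1 and a continuous nonnegative `g` on `[a,b]`,
`(∫ f(A_t) g(A_t) dμ) ⊗ₛ (∫ f(A_t⁻¹) g(A_t) dμ) ≤ ((a²+b²)/(2ab)) (∫ g(A_t) dμ)^{⊗2}`. -/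
theorem kantorovich_integral_tensor_f_g {k : ℕ} {Ω : Type*} [MeasurableSpace Ω]
    (μ : Measure Ω) [IsFiniteMeasure μ] (a b : ℝ) (ha : 0 < a) (hab : a ≤ b)
    (A : Ω → Matrix (Fin k) (Fin k) ℂ) (hAmeas : AEStronglyMeasurable A μ)
    (hAherm : ∀ t, (A t).IsHermitian)
    (hAa : ∀ t, (A t - a • 1).PosSemidef)
    (hAb : ∀ t, ((b • 1 : Matrix (Fin k) (Fin k) ℂ) - A t).PosSemidef)
    (f : ℝ → ℝ)
    (hf_cont : ContinuousOn f (Set.Icc a b ∪ Set.Icc (1 / b) (1 / a)))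
    (hf_one : ∀ x ∈ Set.Icc a b, f x * f (1 / x) ≤ 1)
    (hf_maps : Set.MapsTo f (Set.Icc a b) (Set.Icc a b) ∨
      Set.MapsTo f (Set.Icc a b) (Set.Icc (1 / b) (1 / a)))
    (g : ℝ → ℝ) (hg_cont : ContinuousOn g (Set.Icc a b))
    (hg_nonneg : ∀ x ∈ Set.Icc a b, 0 ≤ g x) :
    (((a ^ 2 + b ^ 2) / (2 * a * b)) • ((∫ t, cfc g (A t) ∂μ) ⊗ₖ (∫ t, cfc g (A t) ∂μ))
      - symKron (∫ t, cfc f (A t) * cfc g (A t) ∂μ)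
          (∫ t, cfc f ((A t)⁻¹) * cfc g (A t) ∂μ)).PosSemidef := by
  have hb : 0 < b := lt_of_lt_of_le ha hab
  set K : ℝ := (a ^ 2 + b ^ 2) / (2 * a * b) with hK
  have heig : ∀ t i, (hAherm t).eigenvalues i ∈ Set.Icc a b := fun t i =>
    KIT_eig_mem (hAherm t) (hAa t) (hAb t) i
  set Fg : ℝ → ℝ := fun x => f x * g x with hFg
  set Ftg : ℝ → ℝ := fun x => f x⁻¹ * g x with hFtg
  have hPt : ∀ t, cfc f (A t) * cfc g (A t) = cfc Fg (A t) := fun t =>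
    KIT_cfc_mul (hAherm t) f g
  have hQt : ∀ t, cfc f ((A t)⁻¹) * cfc g (A t) = cfc Ftg (A t) := fun t => by
    rw [KIT_cfc_inv (hAherm t) (KIT_isUnit ha (hAherm t) (heig t)) f,
      KIT_cfc_mul (hAherm t) _ g]
  simp only [hPt, hQt, symKron]
  -- continuity facts
  have hf1 : ContinuousOn f (Set.Icc a b) := hf_cont.mono Set.subset_union_left
  have hf2 : ContinuousOn f (Set.Icc (1 / b) (1 / a)) := hf_cont.mono Set.subset_union_right
  have hFgc : ContinuousOn Fg (Set.Icc a b) := hf1.mul hg_cont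
  have hinv_maps : Set.MapsTo (fun x : ℝ => x⁻¹) (Set.Icc a b) (Set.Icc (1 / b) (1 / a)) := by
    intro x hx
    have hx0 : 0 < x := lt_of_lt_of_le ha hx.1
    have h1 : 1 / b ≤ 1 / x := one_div_le_one_div_of_le hx0 hx.2
    have h2 : 1 / x ≤ 1 / a := one_div_le_one_div_of_le ha hx.1
    rw [one_div x] at h1 h2
    exact ⟨h1, h2⟩
  have hinvc : ContinuousOn (fun x : ℝ => x⁻¹) (Set.Icc a b) :=
    continuousOn_inv₀.mono fun x hx => ne_of_gt (lt_of_lt_of_le ha hx.1)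
  have hFtgc : ContinuousOn Ftg (Set.Icc a b) := (hf2.comp hinvc hinv_maps).mul hg_cont
  -- integrability
  have hGint := KIT_integrable_cfc μ A hAmeas hAherm heig g hg_cont
  have hPint := KIT_integrable_cfc μ A hAmeas hAherm heig Fg hFgc
  have hQint := KIT_integrable_cfc μ A hAmeas hAherm heig Ftg hFtgc
  set IG := ∫ t, cfc g (A t) ∂μ with hIG
  set IP := ∫ t, cfc Fg (A t) ∂μ with hIP
  set IQ := ∫ t, cfc Ftg (A t) ∂μ with hIQ
  -- scalar inequality
  have hd : ∀ x ∈ Set.Icc a b, ∀ y ∈ Set.Icc a b,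
      0 ≤ K * (g x * g y) - (1 / 2) * (Fg x * Ftg y + Ftg x * Fg y) := fun x hx y hy =>
    KIT_scalar_key ha hab f g hf_one hf_maps hg_nonneg x hx y hy
  have hm : ∀ s t : Ω, (K • (cfc g (A s) ⊗ₖ cfc g (A t))
      - ((1 : ℂ) / 2) • (cfc Fg (A s) ⊗ₖ cfc Ftg (A t)
        + cfc Ftg (A s) ⊗ₖ cfc Fg (A t))).PosSemidef := fun s t =>
    KIT_pointwise_psd K g Fg Ftg hd (hAherm s) (hAherm t) (heig s) (heig t)
  -- swap lemmas
  have inner_swapL : ∀ (C : Matrix (Fin k) (Fin k) ℂ) (ψ : ℝ → ℝ),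
      Integrable (fun t => cfc ψ (A t)) μ →
      (∫ t, C ⊗ₖ cfc ψ (A t) ∂μ) = C ⊗ₖ (∫ t, cfc ψ (A t) ∂μ) := fun C ψ h => by
    exact (KIT_kronL C).integral_comp_comm h
  have inner_swapR : ∀ (C : Matrix (Fin k) (Fin k) ℂ) (ψ : ℝ → ℝ),
      Integrable (fun t => cfc ψ (A t)) μ →
      (∫ t, cfc ψ (A t) ⊗ₖ C ∂μ) = (∫ t, cfc ψ (A t) ∂μ) ⊗ₖ C := fun C ψ h => by
    exact (KIT_kronR C).integral_comp_comm h
  -- the inner (t) integral representation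
  have hTeq : ∀ s, K • (cfc g (A s) ⊗ₖ IG)
      - ((1 : ℂ) / 2) • (cfc Fg (A s) ⊗ₖ IQ + cfc Ftg (A s) ⊗ₖ IP)
      = ∫ t, (K • (cfc g (A s) ⊗ₖ cfc g (A t))
        - ((1 : ℂ) / 2) • (cfc Fg (A s) ⊗ₖ cfc Ftg (A t)
          + cfc Ftg (A s) ⊗ₖ cfc Fg (A t))) ∂μ := by
    intro s
    have h1 : Integrable (fun t => cfc g (A s) ⊗ₖ cfc g (A t)) μ :=
      (KIT_kronL _).integrable_comp hGint
    have h2 : Integrable (fun t => cfc Fg (A s) ⊗ₖ cfc Ftg (A t)) μ :=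
      (KIT_kronL _).integrable_comp hQint
    have h3 : Integrable (fun t => cfc Ftg (A s) ⊗ₖ cfc Fg (A t)) μ :=
      (KIT_kronL _).integrable_comp hPint
    have hsm1 : Integrable (fun t => K • (cfc g (A s) ⊗ₖ cfc g (A t))) μ := h1.smul K
    have hsm2 : Integrable (fun t => ((1 : ℂ) / 2) • (cfc Fg (A s) ⊗ₖ cfc Ftg (A t)
        + cfc Ftg (A s) ⊗ₖ cfc Fg (A t))) μ := (h2.add h3).smul ((1 : ℂ) / 2)
    rw [integral_sub hsm1 hsm2, integral_smul, integral_smul,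
      integral_add h2 h3, inner_swapL _ g hGint, inner_swapL _ Ftg hQint, inner_swapL _ Fg hPint]
  -- integrable in s
  have hs1 : Integrable (fun s => cfc g (A s) ⊗ₖ IG) μ := (KIT_kronR IG).integrable_comp hGint
  have hs2 : Integrable (fun s => cfc Fg (A s) ⊗ₖ IQ) μ := (KIT_kronR IQ).integrable_comp hPint
  have hs3 : Integrable (fun s => cfc Ftg (A s) ⊗ₖ IP) μ := (KIT_kronR IP).integrable_comp hQint
  have houter : K • (IG ⊗ₖ IG) - ((1 : ℂ) / 2) • (IP ⊗ₖ IQ + IQ ⊗ₖ IP)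
      = ∫ s, (K • (cfc g (A s) ⊗ₖ IG)
        - ((1 : ℂ) / 2) • (cfc Fg (A s) ⊗ₖ IQ + cfc Ftg (A s) ⊗ₖ IP)) ∂μ := by
    have hsm1 : Integrable (fun s => K • (cfc g (A s) ⊗ₖ IG)) μ := hs1.smul K
    have hsm2 : Integrable (fun s => ((1 : ℂ) / 2) • (cfc Fg (A s) ⊗ₖ IQ
        + cfc Ftg (A s) ⊗ₖ IP)) μ := (hs2.add hs3).smul ((1 : ℂ) / 2)
    rw [integral_sub hsm1 hsm2, integral_smul, integral_smul,
      integral_add hs2 hs3, inner_swapR _ g hGint, inner_swapR _ Fg hPint, inner_swapR _ Ftg hQint]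
  rw [show ((1 : ℂ) / 2) = (1 / 2 : ℂ) from rfl] at houter
  rw [houter]
  refine KIT_psd_integral ?_ ?_
  · exact (hs1.smul K).sub ((hs2.add hs3).smul ((1 : ℂ) / 2))
  · intro s
    rw [hTeq s]
    have h1 : Integrable (fun t => cfc g (A s) ⊗ₖ cfc g (A t)) μ :=
      (KIT_kronL _).integrable_comp hGint
    have h2 : Integrable (fun t => cfc Fg (A s) ⊗ₖ cfc Ftg (A t)) μ :=
      (KIT_kronL _).integrable_comp hQint
    have h3 : Integrable (fun t => cfc Ftg (A s) ⊗ₖ cfc Fg (A t)) μ :=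
      (KIT_kronL _).integrable_comp hPint
    exact KIT_psd_integral ((h1.smul K).sub ((h2.add h3).smul ((1 : ℂ) / 2))) (fun t => hm s t)
end

section
/- Assume the field hypotheses (weights not needed) and suppose in addition that μ(Ω) = 1. Then (∫_Ω A_t² dμ(t)) ⊗_s I ≤ ((a² + b²)/(2ab)) · (∫_Ω A_t dμ(t))^{⊗2}, where I is the k×k identity matrix. (This is a Grüss type integral inequality for the tensor product of operators.) -/
open Matrix MeasureTheory
open scoped Kronecker ComplexOrder

attribute [local instance] Matrix.frobeniusNormedAddCommGroup Matrix.frobeniusNormedSpace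

section Aux

variable {k : ℕ}

lemma kron_conjTranspose (X Y : Matrix (Fin k) (Fin k) ℂ) :
    (X ⊗ₖ Y)ᴴ = Xᴴ ⊗ₖ Yᴴ := by
  ext ⟨i, j⟩ ⟨p, q⟩
  simp [conjTranspose_apply, Matrix.kroneckerMap_apply, star_mul', mul_comm]

lemma posSemidef_kron_s15 {X Y : Matrix (Fin k) (Fin k) ℂ}
    (hX : X.PosSemidef) (hY : Y.PosSemidef) : (X ⊗ₖ Y).PosSemidef := by
  exact hX.kronecker hY

lemma posSemidef_smul_c {n : Type*} [Fintype n] {M : Matrix n n ℂ} (hM : M.PosSemidef)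
    {c : ℂ} (hc : 0 ≤ c) : (c • M).PosSemidef := by
  have hcst : star c = c := by
    rw [Complex.le_def] at hc
    apply Complex.ext <;> simp [← hc.2]
  refine Matrix.posSemidef_iff_dotProduct_mulVec.mpr ⟨?_, ?_⟩
  · ext i j
    simp [conjTranspose_apply, hM.1.apply, Matrix.smul_apply, star_smul, hcst]
  · intro x
    have h : star x ⬝ᵥ (c • M) *ᵥ x = c * (star x ⬝ᵥ M *ᵥ x) := by
      simp [Matrix.smul_mulVec]
    rw [h]
    exact mul_nonneg hc (hM.dotProduct_mulVec_nonneg x)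

lemma posSemidef_smul {n : Type*} [Fintype n] {M : Matrix n n ℂ} (hM : M.PosSemidef)
    {r : ℝ} (hr : 0 ≤ r) : (r • M).PosSemidef := by
  have h : (r • M) = (r : ℂ) • M := by
    ext i j; simp [Matrix.smul_apply, Complex.real_smul]
  rw [h]
  exact posSemidef_smul_c hM (Complex.zero_le_real.mpr hr)

lemma symKron_one_posSemidef {D : Matrix (Fin k) (Fin k) ℂ} (hD : D.PosSemidef) :
    (symKron D 1).PosSemidef := by
  have h1 := posSemidef_kron_s15 hD Matrix.PosSemidef.one
  have h2 := posSemidef_kron_s15 Matrix.PosSemidef.one hD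
  rw [symKron]
  refine posSemidef_smul_c (h1.add h2) ?_
  rw [show ((1:ℂ)/2) = ((1/2 : ℝ) : ℂ) by norm_num]
  exact Complex.zero_le_real.mpr (by norm_num)

lemma posSemidef_diag_nonneg {M : Matrix (Fin k) (Fin k) ℂ} (hM : M.PosSemidef) (i : Fin k) :
    0 ≤ M i i := by
  have h := hM.dotProduct_mulVec_nonneg (Pi.single i 1)
  simpa [dotProduct, Matrix.mulVec, Pi.single_apply, Finset.sum_ite_eq,
    Finset.sum_ite_eq'] using h

lemma posSemidef_det_nonneg {n : ℕ} {M : Matrix (Fin n) (Fin n) ℂ} (hM : M.PosSemidef) :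
    0 ≤ M.det := by
  rw [hM.1.det_eq_prod_eigenvalues]
  have h : (0:ℝ) ≤ ∏ i, hM.1.eigenvalues i :=
    Finset.prod_nonneg fun i _ => hM.eigenvalues_nonneg i
  have h2 : (0:ℂ) ≤ ((∏ i, hM.1.eigenvalues i : ℝ) : ℂ) := Complex.zero_le_real.mpr h
  convert h2 using 1
  push_cast
  rfl

lemma entry_bound {b : ℝ} {M : Matrix (Fin k) (Fin k) ℂ} (hM : M.PosSemidef)
    (hMb : ((b • 1 : Matrix (Fin k) (Fin k) ℂ) - M).PosSemidef) (i j : Fin k) :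
    ‖M i j‖ ≤ b := by
  have hb : 0 ≤ b := by
    have h := posSemidef_diag_nonneg hM i
    have h2 := posSemidef_diag_nonneg hMb i
    have h2' : 0 ≤ (b : ℂ) - M i i := by simpa [Matrix.sub_apply, Matrix.smul_apply] using h2
    have := add_nonneg h h2'
    simp only [add_sub_cancel] at this
    exact_mod_cast Complex.zero_le_real.mp (by simpa using this)
  have hdiag : ∀ l : Fin k, 0 ≤ (M l l).re ∧ (M l l).re ≤ b ∧ (M l l).im = 0 := by
    intro l
    have h1 := posSemidef_diag_nonneg hM l
    have h2 := posSemidef_diag_nonneg hMb l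
    have h2' : 0 ≤ (b : ℂ) - M l l := by simpa [Matrix.sub_apply, Matrix.smul_apply] using h2
    rw [Complex.le_def] at h1 h2'
    simp at h1 h2'
    exact ⟨h1.1, by linarith [h2'.1], h1.2.symm⟩
  have hsub := hM.submatrix ![i, j]
  have hdet := posSemidef_det_nonneg hsub
  rw [Matrix.det_fin_two] at hdet
  simp only [Matrix.submatrix_apply, Matrix.cons_val_zero, Matrix.cons_val_one, Matrix.head_cons]
    at hdet
  have hherm : M j i = star (M i j) := by
    have h := hM.1
    rw [Matrix.IsHermitian] at h
    conv_lhs => rw [← h]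
    simp [conjTranspose_apply]
  rw [hherm] at hdet
  have hmc : M i j * star (M i j) = (Complex.normSq (M i j) : ℂ) := Complex.mul_conj _
  rw [hmc] at hdet
  rw [Complex.le_def] at hdet
  simp only [Complex.zero_re, Complex.sub_re, Complex.mul_re, Complex.ofReal_re] at hdet
  obtain ⟨hi1, hi2, hi3⟩ := hdiag i
  obtain ⟨hj1, hj2, hj3⟩ := hdiag j
  have key : Complex.normSq (M i j) ≤ b * b := by
    have h : Complex.normSq (M i j) ≤ (M i i).re * (M j j).re := by
      rw [hi3, hj3] at hdet; simpa using hdet.1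
    calc Complex.normSq (M i j) ≤ (M i i).re * (M j j).re := h
      _ ≤ b * b := by nlinarith
  have hsq : ‖M i j‖ ^ 2 ≤ b ^ 2 := by
    rw [Complex.sq_norm]
    nlinarith [key]
  calc ‖M i j‖ = Real.sqrt (‖M i j‖ ^ 2) := (Real.sqrt_sq (norm_nonneg _)).symm
    _ ≤ Real.sqrt (b ^ 2) := Real.sqrt_le_sqrt hsq
    _ = b := Real.sqrt_sq hb

lemma norm_bound {b : ℝ} {M : Matrix (Fin k) (Fin k) ℂ} (hM : M.PosSemidef)
    (hMb : ((b • 1 : Matrix (Fin k) (Fin k) ℂ) - M).PosSemidef) :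
    ‖M‖ ≤ k * b := by
  by_cases hk : k = 0
  · subst hk
    have : M = 0 := by ext i j; exact absurd i.2 (by simp)
    simp [this]
  have hb : 0 ≤ b := by
    obtain ⟨i⟩ : Nonempty (Fin k) := ⟨⟨0, Nat.pos_of_ne_zero hk⟩⟩
    have := entry_bound hM hMb i i
    exact le_trans (norm_nonneg _) this
  rw [Matrix.frobenius_norm_def]
  have hsum : (∑ i, ∑ j, ‖M i j‖ ^ (2 : ℝ)) ≤ ((k : ℝ) * b) ^ 2 := by
    calc (∑ i : Fin k, ∑ j : Fin k, ‖M i j‖ ^ (2 : ℝ))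
        ≤ ∑ _i : Fin k, ∑ _j : Fin k, b ^ 2 := by
          apply Finset.sum_le_sum; intro i _
          apply Finset.sum_le_sum; intro j _
          rw [Real.rpow_two]
          exact pow_le_pow_left₀ (norm_nonneg _) (entry_bound hM hMb i j) 2
      _ = (k : ℝ) * ((k : ℝ) * b ^ 2) := by simp [Finset.sum_const, mul_assoc]
      _ ≤ ((k : ℝ) * b) ^ 2 := by nlinarith [sq_nonneg ((k:ℝ) - 1), Nat.cast_nonneg (α := ℝ) k]
  have h1 : (0:ℝ) ≤ ∑ i, ∑ j, ‖M i j‖ ^ (2 : ℝ) := by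
    apply Finset.sum_nonneg; intro i _; apply Finset.sum_nonneg; intro j _
    positivity
  calc (∑ i, ∑ j, ‖M i j‖ ^ (2 : ℝ)) ^ (1/2 : ℝ)
      ≤ (((k : ℝ) * b) ^ 2) ^ (1/2 : ℝ) := Real.rpow_le_rpow h1 hsum (by norm_num)
    _ = ((k : ℝ) * b) := by
        rw [← Real.rpow_two, ← Real.rpow_mul (by positivity)]
        norm_num

noncomputable instance myCENorm : ContinuousENorm (Matrix (Fin k) (Fin k) ℂ) :=
  SeminormedAddGroup.toContinuousENorm

/-- The quadratic form `M ↦ star x ⬝ᵥ M *ᵥ x` as a continuous linear map. -/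
noncomputable def quadCLM (x : Fin k → ℂ) : Matrix (Fin k) (Fin k) ℂ →L[ℂ] ℂ :=
  LinearMap.toContinuousLinearMap
    { toFun := fun M => star x ⬝ᵥ M *ᵥ x
      map_add' := fun M N => by simp [Matrix.add_mulVec, dotProduct_add]
      map_smul' := fun c M => by simp [Matrix.smul_mulVec] }

/-- Conjugate transpose as a continuous `ℝ`-linear map. -/
noncomputable def ctCLM : Matrix (Fin k) (Fin k) ℂ →L[ℝ] Matrix (Fin k) (Fin k) ℂ :=
  LinearMap.toContinuousLinearMap
    { toFun := fun M => Mᴴ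
      map_add' := fun M N => conjTranspose_add M N
      map_smul' := fun c M => by
        ext i j
        simp [conjTranspose_apply, Matrix.smul_apply] }

lemma integral_isHermitian {Ω : Type*} [MeasurableSpace Ω] {μ : Measure Ω}
    {f : Ω → Matrix (Fin k) (Fin k) ℂ} (hint : Integrable f μ)
    (hherm : ∀ t, (f t).IsHermitian) : (∫ t, f t ∂μ).IsHermitian := by
  have h1 : (∫ t, f t ∂μ)ᴴ = ctCLM (∫ t, f t ∂μ) := rfl
  rw [Matrix.IsHermitian, h1]
  erw [← ContinuousLinearMap.integral_comp_comm ctCLM hint]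
  congr 1
  funext t
  exact hherm t

lemma integral_posSemidef {Ω : Type*} [MeasurableSpace Ω] {μ : Measure Ω}
    {f : Ω → Matrix (Fin k) (Fin k) ℂ} (hint : Integrable f μ)
    (hpsd : ∀ t, (f t).PosSemidef) : (∫ t, f t ∂μ).PosSemidef := by
  refine Matrix.posSemidef_iff_dotProduct_mulVec.mpr
    ⟨integral_isHermitian hint fun t => (hpsd t).1, fun x => ?_⟩
  have h1 : star x ⬝ᵥ (∫ t, f t ∂μ) *ᵥ x = quadCLM x (∫ t, f t ∂μ) := rfl
  rw [h1]
  erw [← ContinuousLinearMap.integral_comp_comm (quadCLM x) hint]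
  have hg : ∀ t, quadCLM x (f t) = (((quadCLM x (f t)).re : ℝ) : ℂ) := by
    intro t
    have h := (hpsd t).dotProduct_mulVec_nonneg x
    rw [Complex.le_def] at h
    apply Complex.ext
    · simp
    · exact (by simpa using h.2.symm : (star x ⬝ᵥ f t *ᵥ x).im = 0)
  have hre : ∀ t, 0 ≤ (quadCLM x (f t)).re := by
    intro t
    have h := (hpsd t).dotProduct_mulVec_nonneg x
    rw [Complex.le_def] at h
    exact (by simpa using h.1 : 0 ≤ (star x ⬝ᵥ f t *ᵥ x).re)
  calc (0:ℂ) ≤ ((∫ t, (quadCLM x (f t)).re ∂μ : ℝ) : ℂ) :=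
        Complex.zero_le_real.mpr (integral_nonneg hre)
    _ = ∫ t, (((quadCLM x (f t)).re : ℝ) : ℂ) ∂μ := (integral_ofReal (𝕜 := ℂ)).symm
    _ = ∫ t, quadCLM x (f t) ∂μ := by congr 1; funext t; exact (hg t).symm

open scoped MatrixOrder in
lemma pointwise_psd {a b : ℝ} {M : Matrix (Fin k) (Fin k) ℂ}
    (hMa : (M - a • 1).PosSemidef)
    (hMb : ((b • 1 : Matrix (Fin k) (Fin k) ℂ) - M).PosSemidef) :
    ((a + b) • M - (a * b) • (1 : Matrix (Fin k) (Fin k) ℂ) - M ^ 2).PosSemidef := by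
  set P := M - a • (1 : Matrix (Fin k) (Fin k) ℂ) with hP
  set S := CFC.sqrt P with hSdef
  have hSh : Sᴴ = S := (CFC.sqrt_nonneg P).posSemidef.1
  have hSS : S * S = P := CFC.sqrt_mul_sqrt_self P hMa.nonneg
  have hPS : P * S = S * P := by rw [← hSS, mul_assoc]
  have hQS : ((b • 1 : Matrix (Fin k) (Fin k) ℂ) - M) * S
      = S * ((b • 1 : Matrix (Fin k) (Fin k) ℂ) - M) := by
    have hQ : (b • 1 : Matrix (Fin k) (Fin k) ℂ) - M = (b - a) • 1 - P := by
      rw [hP]; module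
    rw [hQ, Matrix.sub_mul, Matrix.mul_sub, Matrix.smul_mul, Matrix.mul_smul, one_mul, mul_one,
      hPS]
  have key : (a + b) • M - (a * b) • (1 : Matrix (Fin k) (Fin k) ℂ) - M ^ 2
      = Sᴴ * ((b • 1 : Matrix (Fin k) (Fin k) ℂ) - M) * S := by
    rw [hSh]
    calc (a + b) • M - (a * b) • (1 : Matrix (Fin k) (Fin k) ℂ) - M ^ 2
        = ((b • 1 : Matrix (Fin k) (Fin k) ℂ) - M) * P := by
          rw [hP]
          simp only [Matrix.sub_mul, Matrix.mul_sub, Matrix.smul_mul, Matrix.mul_smul,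
            Matrix.one_mul, Matrix.mul_one, pow_two]
          module
      _ = ((b • 1 : Matrix (Fin k) (Fin k) ℂ) - M) * S * S := by rw [mul_assoc, hSS]
      _ = S * ((b • 1 : Matrix (Fin k) (Fin k) ℂ) - M) * S := by rw [hQS]
  rw [key]
  exact hMb.conjTranspose_mul_mul_same S

lemma sub_kron_s15 (X Y Z : Matrix (Fin k) (Fin k) ℂ) :
    (X - Y) ⊗ₖ Z = X ⊗ₖ Z - Y ⊗ₖ Z := by
  ext ⟨i, j⟩ ⟨p, q⟩
  simp [Matrix.kroneckerMap_apply, sub_mul]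

lemma kron_sub_s15 (X Y Z : Matrix (Fin k) (Fin k) ℂ) :
    X ⊗ₖ (Y - Z) = X ⊗ₖ Y - X ⊗ₖ Z := by
  ext ⟨i, j⟩ ⟨p, q⟩
  simp [Matrix.kroneckerMap_apply, mul_sub]

end Aux

/-- Inequality (5.3): Grüss type integral inequality for the tensor product. If `μ(Ω) = 1`,
then `(∫ A_t² dμ) ⊗ₛ I ≤ ((a²+b²)/(2ab)) (∫ A_t dμ)^{⊗2}`. -/
theorem gruss_integral_tensor {k : ℕ} {Ω : Type*} [MeasurableSpace Ω]
    (μ : Measure Ω) [IsProbabilityMeasure μ] (a b : ℝ) (ha : 0 < a) (hab : a ≤ b)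
    (A : Ω → Matrix (Fin k) (Fin k) ℂ) (hAmeas : AEStronglyMeasurable A μ)
    (hAherm : ∀ t, (A t).IsHermitian)
    (hAa : ∀ t, (A t - a • 1).PosSemidef)
    (hAb : ∀ t, ((b • 1 : Matrix (Fin k) (Fin k) ℂ) - A t).PosSemidef) :
    (((a ^ 2 + b ^ 2) / (2 * a * b)) • ((∫ t, A t ∂μ) ⊗ₖ (∫ t, A t ∂μ))
      - symKron (∫ t, A t ^ 2 ∂μ) 1).PosSemidef := by
  have hb : 0 < b := lt_of_lt_of_le ha hab
  -- each A t is PSD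
  have hApsd : ∀ t, (A t).PosSemidef := by
    intro t
    have h := (hAa t).add (posSemidef_smul Matrix.PosSemidef.one ha.le)
    simpa using h
  -- norm bound
  have hAbd : ∀ t, ‖A t‖ ≤ (k : ℝ) * b := fun t => norm_bound (hApsd t) (hAb t)
  -- integrability
  have hInt : Integrable A μ := by
    refine Integrable.mono' (integrable_const ((k : ℝ) * b)) hAmeas ?_
    exact ae_of_all _ hAbd
  have hA2meas : AEStronglyMeasurable (fun t => A t ^ 2) μ := by
    simp only [pow_two]
    exact hAmeas.mul hAmeas
  have hInt2 : Integrable (fun t => A t ^ 2) μ := by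
    refine Integrable.mono' (integrable_const (((k : ℝ) * b) ^ 2)) hA2meas ?_
    refine ae_of_all _ fun t => ?_
    rw [pow_two, pow_two]
    calc ‖A t * A t‖ ≤ ‖A t‖ * ‖A t‖ := Matrix.frobenius_norm_mul _ _
      _ ≤ ((k : ℝ) * b) * ((k : ℝ) * b) := by
          have h0 := norm_nonneg (A t)
          have h1 := hAbd t
          nlinarith
  set B := ∫ t, A t ∂μ with hBdef
  set S := ∫ t, A t ^ 2 ∂μ with hSdef
  -- B - a•1 is PSD
  have hBa : (B - a • (1 : Matrix (Fin k) (Fin k) ℂ)).PosSemidef := by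
    have heq : ∫ t, (A t - a • (1 : Matrix (Fin k) (Fin k) ℂ)) ∂μ = B - a • 1 := by
      rw [integral_sub hInt (integrable_const _), integral_const]
      simp
      rfl
    rw [← heq]
    exact integral_posSemidef (hInt.sub (integrable_const _)) hAa
  have hBb : ((b • 1 : Matrix (Fin k) (Fin k) ℂ) - B).PosSemidef := by
    have heq : ∫ t, ((b • 1 : Matrix (Fin k) (Fin k) ℂ) - A t) ∂μ = b • 1 - B := by
      rw [integral_sub (integrable_const _) hInt, integral_const]
      simp
      rfl
    rw [← heq]
    exact integral_posSemidef ((integrable_const _).sub hInt) hAb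
  -- step 1 : (a+b) • B - ab • 1 - S is PSD
  have hStep1 : ((a + b) • B - (a * b) • (1 : Matrix (Fin k) (Fin k) ℂ) - S).PosSemidef := by
    have heq : ∫ t, ((a + b) • A t - (a * b) • (1 : Matrix (Fin k) (Fin k) ℂ) - A t ^ 2) ∂μ
        = (a + b) • B - (a * b) • 1 - S := by
      have hIntsmul : Integrable (fun t => (a + b) • A t) μ := hInt.smul (a + b)
      have hIntc : Integrable (fun _ : Ω => (a * b) • (1 : Matrix (Fin k) (Fin k) ℂ)) μ :=
        integrable_const _
      have hIntff : Integrable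
          (fun t => (a + b) • A t - (a * b) • (1 : Matrix (Fin k) (Fin k) ℂ)) μ := by
        exact hIntsmul.sub hIntc
      rw [integral_sub hIntff hInt2, integral_sub hIntsmul hIntc,
        integral_smul, integral_const]
      simp
      rfl
    rw [← heq]
    have hIntsmul : Integrable (fun t => (a + b) • A t) μ := hInt.smul (a + b)
    have hIntc : Integrable (fun _ : Ω => (a * b) • (1 : Matrix (Fin k) (Fin k) ℂ)) μ :=
      integrable_const _
    have hIntff : Integrable
        (fun t => (a + b) • A t - (a * b) • (1 : Matrix (Fin k) (Fin k) ℂ)) μ := by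
      exact hIntsmul.sub hIntc
    exact integral_posSemidef (by exact hIntff.sub hInt2)
      fun t => pointwise_psd (hAa t) (hAb t)
  -- algebraic decomposition
  have ha' : (a : ℂ) ≠ 0 := by exact_mod_cast ha.ne'
  have hb' : (b : ℂ) ≠ 0 := by exact_mod_cast hb.ne'
  have hG : ((a ^ 2 + b ^ 2) / (2 * a * b)) • (B ⊗ₖ B) - symKron S 1
      = ((b ^ 2 / (2 * a * b)) • ((B - a • 1) ⊗ₖ (B - a • 1))
          + (a ^ 2 / (2 * a * b)) • (((b • 1 : Matrix (Fin k) (Fin k) ℂ) - B)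
              ⊗ₖ ((b • 1 : Matrix (Fin k) (Fin k) ℂ) - B)))
        + symKron ((a + b) • B - (a * b) • (1 : Matrix (Fin k) (Fin k) ℂ) - S) 1 := by
    simp only [symKron, sub_kron_s15, kron_sub_s15, Matrix.smul_kronecker, Matrix.kronecker_smul,
      smul_add, smul_sub, smul_smul]
    match_scalars <;> field_simp <;> ring
  rw [hG]
  refine PosSemidef.add (PosSemidef.add ?_ ?_) (symKron_one_posSemidef hStep1)
  · exact posSemidef_smul (posSemidef_kron_s15 hBa hBa) (by positivity)
  · exact posSemidef_smul (posSemidef_kron_s15 hBb hBb) (by positivity)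
end

section
/- Assume the field hypotheses (weights not needed) and suppose that 1 ∈ [a, b]. Then for any α ∈ [−1, 1] and any continuous function g : [a, b] → [0, ∞), (∫_Ω A_t^{α} g(A_t) dμ(t)) ⊗_s (∫_Ω A_t^{−α} g(A_t) dμ(t)) ≤ ((a² + b²)/(2ab)) · (∫_Ω g(A_t) dμ(t))^{⊗2}, where real powers A_t^{±α} and g(A_t) are defined by the functional calculus for the positive definite matrices A_t. -/
open Matrix MeasureTheory
open scoped Kronecker ComplexOrder

attribute [local instance] Matrix.frobeniusNormedAddCommGroup Matrix.frobeniusNormedSpace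

noncomputable instance kantCENorm {m n : Type*} [Fintype m] [Fintype n] :
    ContinuousENorm (Matrix m n ℂ) :=
  SeminormedAddGroup.toContinuousENorm

instance kantPMS {m n : Type*} [Fintype m] [Fintype n] :
    TopologicalSpace.PseudoMetrizableSpace (Matrix m n ℂ) :=
  @UniformSpace.pseudoMetrizableSpace _ PseudoEMetricSpace.toUniformSpace
    EMetric.instIsCountablyGeneratedUniformity

section KantAux

open Polynomial Filter
open scoped InnerProductSpace

variable {k : ℕ} {a b : ℝ}

/-! ### Scalar lemmas -/

private lemma kant_rpow_le_div (ha : 0 < a) (hab : a ≤ b) {r α : ℝ}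
    (hr : r ∈ Set.Icc (a/b) (b/a)) (hα : α ∈ Set.Icc (-1 : ℝ) 1) : r ^ α ≤ b / a := by
  have hb : 0 < b := lt_of_lt_of_le ha hab
  have hr0 : 0 < r := lt_of_lt_of_le (by positivity) hr.1
  rcases le_total 1 r with h1r | hr1
  · calc r ^ α ≤ r ^ (1:ℝ) := Real.rpow_le_rpow_of_exponent_le h1r hα.2
      _ = r := Real.rpow_one r
      _ ≤ b / a := hr.2
  · calc r ^ α ≤ r ^ (-1:ℝ) := Real.rpow_le_rpow_of_exponent_ge hr0 hr1 hα.1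
      _ = r⁻¹ := by rw [Real.rpow_neg_one]
      _ ≤ (a/b)⁻¹ := by gcongr; exact hr.1
      _ = b / a := by rw [inv_div]

private lemma kant_key_scalar (ha : 0 < a) (hab : a ≤ b) {α : ℝ}
    (hα : α ∈ Set.Icc (-1 : ℝ) 1)
    {x y gx gy : ℝ} (hx : x ∈ Set.Icc a b) (hy : y ∈ Set.Icc a b)
    (hgx : 0 ≤ gx) (hgy : 0 ≤ gy) :
    ((x ^ α * gx) * (y ^ (-α) * gy) + (x ^ (-α) * gx) * (y ^ α * gy)) / 2
      ≤ (a^2 + b^2)/(2*a*b) * (gx * gy) := by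
  have hb : 0 < b := lt_of_lt_of_le ha hab
  have hx0 : 0 < x := lt_of_lt_of_le ha hx.1
  have hy0 : 0 < y := lt_of_lt_of_le ha hy.1
  set u : ℝ := (x/y) ^ α with hu_def
  have hu0 : 0 < u := Real.rpow_pos_of_pos (by positivity) α
  have hu : x ^ α * y ^ (-α) = u := by
    rw [hu_def, Real.div_rpow hx0.le hy0.le, Real.rpow_neg hy0.le, div_eq_mul_inv]
  have hu' : x ^ (-α) * y ^ α = u⁻¹ := by
    rw [hu_def, ← Real.inv_rpow (by positivity), inv_div, Real.div_rpow hy0.le hx0.le,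
      Real.rpow_neg hx0.le, div_eq_mul_inv, mul_comm]
  have hmem1 : x/y ∈ Set.Icc (a/b) (b/a) := by
    constructor
    · rw [div_le_div_iff₀ hb (by positivity)]; nlinarith [hx.1, hy.2]
    · rw [div_le_div_iff₀ (by positivity) ha]; nlinarith [hx.2, hy.1]
  have hmem2 : y/x ∈ Set.Icc (a/b) (b/a) := by
    constructor
    · rw [div_le_div_iff₀ hb (by positivity)]; nlinarith [hy.1, hx.2]
    · rw [div_le_div_iff₀ (by positivity) ha]; nlinarith [hy.2, hx.1]
  have hub : u ≤ b/a := kant_rpow_le_div ha hab hmem1 hα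
  have hub' : u⁻¹ ≤ b/a := by
    have h : u⁻¹ = (y/x) ^ α := by
      rw [hu_def, ← Real.inv_rpow (by positivity), inv_div]
    rw [h]
    exact kant_rpow_le_div ha hab hmem2 hα
  have h1 : u * a ≤ b := (le_div_iff₀ ha).mp hub
  have h2 : u⁻¹ * a ≤ b := (le_div_iff₀ ha).mp hub'
  have hw : u * u⁻¹ = 1 := mul_inv_cancel₀ hu0.ne'
  have hfin : (u + u⁻¹)/2 ≤ (a^2+b^2)/(2*a*b) := by
    rw [div_le_div_iff₀ (by norm_num) (by positivity)]
    nlinarith [mul_nonneg (sub_nonneg.mpr h1) (sub_nonneg.mpr h2), hw]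
  calc ((x ^ α * gx) * (y ^ (-α) * gy) + (x ^ (-α) * gx) * (y ^ α * gy)) / 2
      = ((u + u⁻¹)/2) * (gx * gy) := by rw [← hu', ← hu]; ring
    _ ≤ (a^2+b^2)/(2*a*b) * (gx * gy) := by
        apply mul_le_mul_of_nonneg_right hfin (by positivity)

/-! ### Eigenvalue bounds -/

private lemma kant_eig_mem {X : Matrix (Fin k) (Fin k) ℂ} (hX : X.IsHermitian)
    (hXa : (X - a • 1).PosSemidef) (hXb : ((b • 1 : Matrix (Fin k) (Fin k) ℂ) - X).PosSemidef)
    (i : Fin k) : hX.eigenvalues i ∈ Set.Icc a b := by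
  set v : Fin k → ℂ := ⇑(hX.eigenvectorBasis i) with hv
  have hv1 : star v ⬝ᵥ v = 1 := by
    have h3 := EuclideanSpace.inner_eq_star_dotProduct (𝕜 := ℂ)
      (hX.eigenvectorBasis i) (hX.eigenvectorBasis i)
    rw [inner_self_eq_norm_sq_to_K (𝕜 := ℂ), hX.eigenvectorBasis.orthonormal.1 i] at h3
    rw [dotProduct_comm]
    simpa [hv] using h3.symm
  have hXv : X *ᵥ v = (hX.eigenvalues i : ℂ) • v := by
    rw [hv, hX.mulVec_eigenvectorBasis]
    ext j; simp [RCLike.real_smul_eq_coe_smul (K := ℂ)]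
  have key : star v ⬝ᵥ (X *ᵥ v) = (hX.eigenvalues i : ℂ) := by
    rw [hXv, dotProduct_smul, hv1, smul_eq_mul, mul_one]
  have hsm : ∀ c : ℝ, (c • (1 : Matrix (Fin k) (Fin k) ℂ)) *ᵥ v = (c:ℂ) • v := by
    intro c
    rw [RCLike.real_smul_eq_coe_smul (K := ℂ), smul_mulVec, one_mulVec]
    rfl
  constructor
  · have h0 := hXa.dotProduct_mulVec_nonneg v
    rw [sub_mulVec, hsm, dotProduct_sub, key, dotProduct_smul, hv1, smul_eq_mul, mul_one] at h0
    have : (0:ℝ) ≤ hX.eigenvalues i - a := by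
      have := Complex.le_def.mp h0
      simpa using this.1
    linarith
  · have h0 := hXb.dotProduct_mulVec_nonneg v
    rw [sub_mulVec, hsm, dotProduct_sub, key, dotProduct_smul, hv1, smul_eq_mul, mul_one] at h0
    have : (0:ℝ) ≤ b - hX.eigenvalues i := by
      have := Complex.le_def.mp h0
      simpa using this.1
    linarith

/-! ### Norm bounds and measurability for the functional calculus -/

private lemma kant_contOn_spec (f : ℝ → ℝ) (X : Matrix (Fin k) (Fin k) ℂ) :
    ContinuousOn f (spectrum ℝ X) := by
  rw [continuousOn_iff_continuous_restrict]
  have : Finite (spectrum ℝ X) := X.finite_real_spectrum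
  exact continuous_of_discreteTopology

private lemma kant_unitary_row_sq {U : Matrix (Fin k) (Fin k) ℂ}
    (hU : U ∈ Matrix.unitaryGroup (Fin k) ℂ) (i : Fin k) : ∑ j, ‖U i j‖ ^ 2 = 1 := by
  have h := congrFun (congrFun (mem_unitaryGroup_iff.mp hU) i) i
  rw [mul_apply] at h
  have h2 : ∀ j, U i j * star U j i = ((‖U i j‖ ^ 2 : ℝ) : ℂ) := by
    intro j
    rw [star_apply, Complex.star_def, Complex.mul_conj]
    norm_cast
    rw [Complex.normSq_eq_norm_sq]
  rw [Finset.sum_congr rfl (fun j _ => h2 j), ← Complex.ofReal_sum, one_apply_eq] at h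
  exact_mod_cast h

private lemma kant_norm_unitary {U : Matrix (Fin k) (Fin k) ℂ}
    (hU : U ∈ Matrix.unitaryGroup (Fin k) ℂ) : ‖U‖ = Real.sqrt k := by
  rw [frobenius_norm_def]
  have h : ∀ (i j : Fin k), ‖U i j‖ ^ (2:ℝ) = ‖U i j‖ ^ (2:ℕ) := fun i j =>
    Real.rpow_natCast _ 2
  simp_rw [h, kant_unitary_row_sq hU]
  simp [Real.sqrt_eq_rpow]

private lemma kant_norm_diag_le {w : Fin k → ℂ} {C : ℝ} (hC : 0 ≤ C) (hw : ∀ i, ‖w i‖ ≤ C) :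
    ‖(diagonal w : Matrix (Fin k) (Fin k) ℂ)‖ ≤ Real.sqrt k * C := by
  rw [frobenius_norm_diagonal, PiLp.norm_eq_of_L2]
  have h1 : ∑ i, ‖w i‖ ^ 2 ≤ (k : ℝ) * C ^ 2 := by
    calc ∑ i, ‖w i‖ ^ 2 ≤ ∑ _i : Fin k, C ^ 2 := by
          apply Finset.sum_le_sum
          intro i _
          exact pow_le_pow_left₀ (norm_nonneg _) (hw i) 2
      _ = (k : ℝ) * C ^ 2 := by simp [mul_comm]
  calc Real.sqrt (∑ i, ‖(WithLp.equiv 2 _).symm w i‖ ^ 2) ≤ Real.sqrt ((k:ℝ) * C ^ 2) := by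
        apply Real.sqrt_le_sqrt
        simpa using h1
    _ = Real.sqrt k * C := by
        rw [Real.sqrt_mul (by positivity), Real.sqrt_sq hC]

private lemma kant_norm_cfc_le {X : Matrix (Fin k) (Fin k) ℂ} (hX : X.IsHermitian)
    {f : ℝ → ℝ} {C : ℝ} (hC : 0 ≤ C) (hf : ∀ i, |f (hX.eigenvalues i)| ≤ C) :
    ‖cfc f X‖ ≤ Real.sqrt k ^ 3 * C := by
  rw [hX.cfc_eq, Matrix.IsHermitian.cfc]
  set U : Matrix (Fin k) (Fin k) ℂ := (hX.eigenvectorUnitary : Matrix (Fin k) (Fin k) ℂ)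
  have hUnorm : ‖U‖ = Real.sqrt k := kant_norm_unitary hX.eigenvectorUnitary.2
  have hsUnorm : ‖star U‖ = Real.sqrt k := by
    rw [star_eq_conjTranspose, frobenius_norm_conjTranspose, hUnorm]
  have hD : ‖(diagonal (RCLike.ofReal ∘ f ∘ hX.eigenvalues) : Matrix (Fin k) (Fin k) ℂ)‖
      ≤ Real.sqrt k * C := by
    apply kant_norm_diag_le hC
    intro i
    simp only [Function.comp_apply]
    rw [RCLike.norm_ofReal]
    exact hf i
  calc ‖U * diagonal (RCLike.ofReal ∘ f ∘ hX.eigenvalues) * star U‖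
      ≤ ‖U * diagonal (RCLike.ofReal ∘ f ∘ hX.eigenvalues)‖ * ‖star U‖ :=
        frobenius_norm_mul _ _
    _ ≤ ‖U‖ * ‖diagonal (RCLike.ofReal ∘ f ∘ hX.eigenvalues)‖ * ‖star U‖ := by
        apply mul_le_mul_of_nonneg_right (frobenius_norm_mul _ _) (norm_nonneg _)
    _ ≤ Real.sqrt k * (Real.sqrt k * C) * Real.sqrt k := by
        rw [hUnorm, hsUnorm]
        apply mul_le_mul_of_nonneg_right
          (mul_le_mul_of_nonneg_left hD (Real.sqrt_nonneg _)) (Real.sqrt_nonneg _)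
    _ = Real.sqrt k ^ 3 * C := by ring

variable {Ω : Type*} [MeasurableSpace Ω] {μ : Measure Ω}

private lemma kant_aesm_cfc {A : Ω → Matrix (Fin k) (Fin k) ℂ}
    (hAmeas : AEStronglyMeasurable A μ) (hAherm : ∀ t, (A t).IsHermitian)
    (heig : ∀ t i, (hAherm t).eigenvalues i ∈ Set.Icc a b)
    {f : ℝ → ℝ} (hf : ContinuousOn f (Set.Icc a b)) :
    AEStronglyMeasurable (fun t => cfc f (A t)) μ := by
  have hp : ∀ n : ℕ, ∃ p : ℝ[X], ∀ x ∈ Set.Icc a b, |p.eval x - f x| < 1/(n+1) := fun n =>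
    exists_polynomial_near_of_continuousOn a b f hf _ (by positivity)
  choose p hp using hp
  apply aestronglyMeasurable_of_tendsto_ae (f := fun n t => aeval (A t) (p n)) atTop
  · exact fun n => (Polynomial.continuous_aeval (p n)).comp_aestronglyMeasurable hAmeas
  · apply ae_of_all
    intro t
    apply tendsto_iff_norm_sub_tendsto_zero.mpr
    apply squeeze_zero (fun n => norm_nonneg _)
      (g := fun n : ℕ => Real.sqrt k ^ 3 * (1/((n:ℝ)+1)))
    · intro n
      have h1 : aeval (A t) (p n) - cfc f (A t)
          = cfc (fun x => (p n).eval x - f x) (A t) := by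
        rw [← cfc_polynomial (p n) (A t) (hAherm t)]
        exact (cfc_sub (fun x => eval x (p n)) f (A t)
          (kant_contOn_spec _ _) (kant_contOn_spec _ _)).symm
      rw [h1]
      apply kant_norm_cfc_le (hAherm t) (by positivity)
      intro i
      exact le_of_lt (hp n _ (heig t i))
    · have h : Tendsto (fun n : ℕ => 1/((n:ℝ)+1)) atTop (nhds 0) :=
        tendsto_one_div_add_atTop_nhds_zero_nat
      simpa using (h.const_mul (Real.sqrt k ^ 3))

private lemma kant_integrable_cfc [IsFiniteMeasure μ] {A : Ω → Matrix (Fin k) (Fin k) ℂ}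
    (hAmeas : AEStronglyMeasurable A μ) (hAherm : ∀ t, (A t).IsHermitian)
    (heig : ∀ t i, (hAherm t).eigenvalues i ∈ Set.Icc a b)
    {f : ℝ → ℝ} (hf : ContinuousOn f (Set.Icc a b)) :
    Integrable (fun t => cfc f (A t)) μ := by
  obtain ⟨C, hC⟩ := (isCompact_Icc (a := a) (b := b)).exists_bound_of_continuousOn hf
  apply Integrable.mono' (integrable_const (Real.sqrt k ^ 3 * max C 0))
    (kant_aesm_cfc hAmeas hAherm heig hf)
  apply ae_of_all
  intro t
  apply kant_norm_cfc_le (hAherm t) (le_max_right _ _)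
  intro i
  calc |f ((hAherm t).eigenvalues i)| = ‖f ((hAherm t).eigenvalues i)‖ := rfl
    _ ≤ C := hC _ (heig t i)
    _ ≤ max C 0 := le_max_left _ _

/-! ### Pointwise positive semidefiniteness -/

private lemma kant_kron_conjTranspose (M N : Matrix (Fin k) (Fin k) ℂ) :
    (M ⊗ₖ N)ᴴ = Mᴴ ⊗ₖ Nᴴ := by
  ext ⟨i₁, i₂⟩ ⟨j₁, j₂⟩
  simp [conjTranspose_apply, kroneckerMap_apply, mul_comm]

private lemma kant_conj_lin_helper (W M N P : Matrix (Fin k × Fin k) (Fin k × Fin k) ℂ)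
    (c : ℝ) (d : ℂ) :
    c • (W * M * Wᴴ) - d • (W * N * Wᴴ + W * P * Wᴴ) = W * (c • M - d • (N + P)) * Wᴴ := by
  simp only [Matrix.mul_sub, Matrix.sub_mul, Matrix.mul_add, Matrix.add_mul,
    Matrix.mul_smul, Matrix.smul_mul]

private lemma kant_pointwise_psd {c : ℝ} (φ ψ γ : ℝ → ℝ)
    (hpt : ∀ x ∈ Set.Icc a b, ∀ y ∈ Set.Icc a b,
      (φ x * ψ y + ψ x * φ y) / 2 ≤ c * (γ x * γ y))
    {X Y : Matrix (Fin k) (Fin k) ℂ} (hX : X.IsHermitian) (hY : Y.IsHermitian)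
    (heigX : ∀ i, hX.eigenvalues i ∈ Set.Icc a b)
    (heigY : ∀ i, hY.eigenvalues i ∈ Set.Icc a b) :
    (c • (cfc γ X ⊗ₖ cfc γ Y)
      - ((1:ℂ)/2) • (cfc φ X ⊗ₖ cfc ψ Y + cfc ψ X ⊗ₖ cfc φ Y)).PosSemidef := by
  set U : Matrix (Fin k) (Fin k) ℂ := (hX.eigenvectorUnitary : Matrix (Fin k) (Fin k) ℂ) with hU
  set V : Matrix (Fin k) (Fin k) ℂ := (hY.eigenvectorUnitary : Matrix (Fin k) (Fin k) ℂ) with hV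
  set W : Matrix (Fin k × Fin k) (Fin k × Fin k) ℂ := U ⊗ₖ V with hW
  have hrw : ∀ f f' : ℝ → ℝ, cfc f X ⊗ₖ cfc f' Y
      = W * diagonal (fun p : Fin k × Fin k =>
          ((f (hX.eigenvalues p.1) * f' (hY.eigenvalues p.2) : ℝ) : ℂ)) * Wᴴ := by
    intro f f'
    rw [hX.cfc_eq, hY.cfc_eq, Matrix.IsHermitian.cfc, Matrix.IsHermitian.cfc,
      Unitary.conjStarAlgAut_apply, Unitary.conjStarAlgAut_apply,
      Matrix.mul_kronecker_mul, Matrix.mul_kronecker_mul, diagonal_kronecker_diagonal, hW,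
      kant_kron_conjTranspose, ← star_eq_conjTranspose U, ← star_eq_conjTranspose V]
    congr 2
    funext p
    simp [Complex.ofReal_mul]
  rw [hrw, hrw, hrw]
  rw [kant_conj_lin_helper]
  apply Matrix.PosSemidef.mul_mul_conjTranspose_same
  have hdiag : (c • diagonal (fun p : Fin k × Fin k =>
        ((γ (hX.eigenvalues p.1) * γ (hY.eigenvalues p.2) : ℝ) : ℂ))
      - ((1:ℂ)/2) • (diagonal (fun p : Fin k × Fin k =>
          ((φ (hX.eigenvalues p.1) * ψ (hY.eigenvalues p.2) : ℝ) : ℂ))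
        + diagonal (fun p : Fin k × Fin k =>
          ((ψ (hX.eigenvalues p.1) * φ (hY.eigenvalues p.2) : ℝ) : ℂ))))
      = diagonal (fun p : Fin k × Fin k =>
          ((c * (γ (hX.eigenvalues p.1) * γ (hY.eigenvalues p.2))
            - (φ (hX.eigenvalues p.1) * ψ (hY.eigenvalues p.2)
              + ψ (hX.eigenvalues p.1) * φ (hY.eigenvalues p.2)) / 2 : ℝ) : ℂ)) := by
    rw [diagonal_add, ← diagonal_smul, ← diagonal_smul, diagonal_sub]
    refine congrArg diagonal (funext fun p => ?_)
    simp only [Pi.smul_apply, smul_eq_mul, Complex.real_smul]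
    push_cast
    ring
  rw [hdiag, posSemidef_diagonal_iff]
  intro p
  rw [Complex.zero_le_real]
  have := hpt _ (heigX p.1) _ (heigY p.2)
  linarith

/-! ### Integrals of matrix-valued functions -/

/-- Entry evaluation as a continuous linear map. -/
private noncomputable def kantEntryCLM {n : Type*} [Fintype n] [DecidableEq n] (i j : n) :
    Matrix n n ℂ →L[ℝ] ℂ :=
  LinearMap.toContinuousLinearMap
    { toFun := fun M => M i j
      map_add' := fun _ _ => rfl
      map_smul' := fun _ _ => rfl }

private lemma kant_integral_entry {n : Type*} [Fintype n] [DecidableEq n]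
    {F : Ω → Matrix n n ℂ} (hF : Integrable F μ) (i j : n) :
    (∫ t, F t ∂μ) i j = ∫ t, F t i j ∂μ :=
  ((kantEntryCLM i j).integral_comp_comm hF).symm

/-- Quadratic form as a continuous linear map. -/
private noncomputable def kantQuadCLM {n : Type*} [Fintype n] [DecidableEq n] (x : n → ℂ) :
    Matrix n n ℂ →L[ℝ] ℂ :=
  LinearMap.toContinuousLinearMap
    { toFun := fun M => star x ⬝ᵥ M *ᵥ x
      map_add' := fun M N => by simp [add_mulVec, dotProduct_add]
      map_smul' := fun r M => by simp [smul_mulVec, dotProduct_smul] }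

private lemma kant_integral_quad {n : Type*} [Fintype n] [DecidableEq n]
    {F : Ω → Matrix n n ℂ} (hF : Integrable F μ) (x : n → ℂ) :
    star x ⬝ᵥ (∫ t, F t ∂μ) *ᵥ x = ∫ t, star x ⬝ᵥ (F t) *ᵥ x ∂μ :=
  ((kantQuadCLM x).integral_comp_comm hF).symm

private lemma kant_integral_posSemidef {n : Type*} [Fintype n] [DecidableEq n]
    {F : Ω → Matrix n n ℂ} (hF : Integrable F μ)
    (hpsd : ∀ t, (F t).PosSemidef) : (∫ t, F t ∂μ).PosSemidef := by
  rw [posSemidef_iff_dotProduct_mulVec]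
  constructor
  · show _ = _
    ext i j
    rw [conjTranspose_apply, kant_integral_entry hF, kant_integral_entry hF, RCLike.star_def,
      ← integral_conj]
    congr 1
    funext t
    rw [← RCLike.star_def, ← conjTranspose_apply, (hpsd t).1]
  · intro x
    rw [kant_integral_quad hF x]
    have hint : Integrable (fun t => star x ⬝ᵥ (F t) *ᵥ x) μ :=
      (kantQuadCLM x).integrable_comp hF
    have hnn : ∀ t, 0 ≤ star x ⬝ᵥ (F t) *ᵥ x := fun t => (hpsd t).dotProduct_mulVec_nonneg x
    rw [Complex.le_def]
    constructor
    · have hre := integral_re (𝕜 := ℂ) hint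
      simp only [RCLike.re_eq_complex_re] at hre
      rw [← hre, Complex.zero_re]
      apply integral_nonneg
      intro t
      exact (Complex.le_def.mp (hnn t)).1
    · have him := integral_im (𝕜 := ℂ) hint
      simp only [RCLike.im_eq_complex_im] at him
      rw [← him, Complex.zero_im]
      have h0 : ∀ t, (star x ⬝ᵥ (F t) *ᵥ x).im = 0 :=
        fun t => ((Complex.le_def.mp (hnn t)).2).symm
      simp [h0]

/-- Left Kronecker multiplication as a continuous linear map. -/
private noncomputable def kantKronL (M : Matrix (Fin k) (Fin k) ℂ) :
    Matrix (Fin k) (Fin k) ℂ →L[ℝ] Matrix (Fin k × Fin k) (Fin k × Fin k) ℂ :=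
  LinearMap.toContinuousLinearMap
    { toFun := fun N => M ⊗ₖ N
      map_add' := fun N P => kroneckerMap_add_right _ (fun a => mul_add a) M N P
      map_smul' := fun r N => by
        rw [RingHom.id_apply]
        exact kroneckerMap_smul_right _ r (fun a b => mul_smul_comm r a b) M N }

/-- Right Kronecker multiplication as a continuous linear map. -/
private noncomputable def kantKronR (M : Matrix (Fin k) (Fin k) ℂ) :
    Matrix (Fin k) (Fin k) ℂ →L[ℝ] Matrix (Fin k × Fin k) (Fin k × Fin k) ℂ :=
  LinearMap.toContinuousLinearMap
    { toFun := fun N => N ⊗ₖ M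
      map_add' := fun N P => kroneckerMap_add_left _ (fun a b c => add_mul a b c) N P M
      map_smul' := fun r N => by
        rw [RingHom.id_apply]
        exact kroneckerMap_smul_left _ r (fun a b => smul_mul_assoc r a b) N M }

private lemma kant_integral_kron_left {F : Ω → Matrix (Fin k) (Fin k) ℂ} (hF : Integrable F μ)
    (M : Matrix (Fin k) (Fin k) ℂ) : M ⊗ₖ (∫ t, F t ∂μ) = ∫ t, M ⊗ₖ F t ∂μ :=
  ((kantKronL M).integral_comp_comm hF).symm

private lemma kant_integral_kron_right {F : Ω → Matrix (Fin k) (Fin k) ℂ} (hF : Integrable F μ)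
    (M : Matrix (Fin k) (Fin k) ℂ) : (∫ t, F t ∂μ) ⊗ₖ M = ∫ t, F t ⊗ₖ M ∂μ :=
  ((kantKronR M).integral_comp_comm hF).symm

end KantAux

/-- Corollary 5.5 (inequality (5.4)): if `1 ∈ [a,b]`, then for any `α ∈ [-1,1]` and continuous
`g : [a,b] → [0,∞)`,
`(∫ A_t^α g(A_t) dμ) ⊗ₛ (∫ A_t^{-α} g(A_t) dμ) ≤ ((a²+b²)/(2ab)) (∫ g(A_t) dμ)^{⊗2}`. -/
theorem kantorovich_integral_tensor_rpow_g {k : ℕ} {Ω : Type*} [MeasurableSpace Ω]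
    (μ : Measure Ω) [IsFiniteMeasure μ] (a b : ℝ) (ha : 0 < a) (hab : a ≤ b)
    (h1 : 1 ∈ Set.Icc a b)
    (A : Ω → Matrix (Fin k) (Fin k) ℂ) (hAmeas : AEStronglyMeasurable A μ)
    (hAherm : ∀ t, (A t).IsHermitian)
    (hAa : ∀ t, (A t - a • 1).PosSemidef)
    (hAb : ∀ t, ((b • 1 : Matrix (Fin k) (Fin k) ℂ) - A t).PosSemidef)
    (α : ℝ) (hα : α ∈ Set.Icc (-1 : ℝ) 1)
    (g : ℝ → ℝ) (hg_cont : ContinuousOn g (Set.Icc a b))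
    (hg_nonneg : ∀ x ∈ Set.Icc a b, 0 ≤ g x) :
    (((a ^ 2 + b ^ 2) / (2 * a * b)) • ((∫ t, cfc g (A t) ∂μ) ⊗ₖ (∫ t, cfc g (A t) ∂μ))
      - symKron (∫ t, cfc (fun x : ℝ => x ^ α) (A t) * cfc g (A t) ∂μ)
          (∫ t, cfc (fun x : ℝ => x ^ (-α)) (A t) * cfc g (A t) ∂μ)).PosSemidef := by
  have hb : 0 < b := lt_of_lt_of_le ha hab
  set c : ℝ := (a ^ 2 + b ^ 2) / (2 * a * b) with hc
  set φ : ℝ → ℝ := fun x => x ^ α * g x with hφ_def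
  set ψ : ℝ → ℝ := fun x => x ^ (-α) * g x with hψ_def
  have heig : ∀ t i, ((hAherm t).eigenvalues i) ∈ Set.Icc a b := fun t i =>
    kant_eig_mem (hAherm t) (hAa t) (hAb t) i
  have hrpow_cont : ∀ β : ℝ, ContinuousOn (fun x : ℝ => x ^ β) (Set.Icc a b) := by
    intro β x hx
    exact (Real.continuousAt_rpow_const x β
      (Or.inl (ne_of_gt (lt_of_lt_of_le ha hx.1)))).continuousWithinAt
  have hφ_cont : ContinuousOn φ (Set.Icc a b) := (hrpow_cont α).mul hg_cont
  have hψ_cont : ContinuousOn ψ (Set.Icc a b) := (hrpow_cont (-α)).mul hg_cont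
  have hprod : ∀ (β : ℝ) (t : Ω), cfc (fun x : ℝ => x ^ β) (A t) * cfc g (A t)
      = cfc (fun x : ℝ => x ^ β * g x) (A t) := fun β t =>
    (cfc_mul _ _ (A t) (kant_contOn_spec _ _) (kant_contOn_spec _ _)).symm
  have intΓ : Integrable (fun t => cfc g (A t)) μ :=
    kant_integrable_cfc hAmeas hAherm heig hg_cont
  have intΦ : Integrable (fun t => cfc φ (A t)) μ :=
    kant_integrable_cfc hAmeas hAherm heig hφ_cont
  have intΨ : Integrable (fun t => cfc ψ (A t)) μ :=
    kant_integrable_cfc hAmeas hAherm heig hψ_cont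
  rw [symKron]
  simp only [hprod]
  rw [← hφ_def, ← hψ_def]
  set IΓ := ∫ t, cfc g (A t) ∂μ with hIΓ
  set IΦ := ∫ t, cfc φ (A t) ∂μ with hIΦ
  set IΨ := ∫ t, cfc ψ (A t) ∂μ with hIΨ
  have hpt : ∀ x ∈ Set.Icc a b, ∀ y ∈ Set.Icc a b,
      (φ x * ψ y + ψ x * φ y) / 2 ≤ c * (g x * g y) := by
    intro x hx y hy
    exact kant_key_scalar ha hab hα hx hy (hg_nonneg x hx) (hg_nonneg y hy)
  have hK_psd : ∀ t s, (c • (cfc g (A t) ⊗ₖ cfc g (A s))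
      - ((1:ℂ)/2) • (cfc φ (A t) ⊗ₖ cfc ψ (A s) + cfc ψ (A t) ⊗ₖ cfc φ (A s))).PosSemidef :=
    fun t s => kant_pointwise_psd φ ψ g hpt (hAherm t) (hAherm s) (heig t) (heig s)
  have inner_eq : ∀ t, (∫ s, (c • (cfc g (A t) ⊗ₖ cfc g (A s))
      - ((1:ℂ)/2) • (cfc φ (A t) ⊗ₖ cfc ψ (A s) + cfc ψ (A t) ⊗ₖ cfc φ (A s))) ∂μ)
      = c • (cfc g (A t) ⊗ₖ IΓ)
        - ((1:ℂ)/2) • (cfc φ (A t) ⊗ₖ IΨ + cfc ψ (A t) ⊗ₖ IΦ) := by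
    intro t
    have i1 : Integrable (fun s => cfc g (A t) ⊗ₖ cfc g (A s)) μ :=
      (kantKronL (cfc g (A t))).integrable_comp intΓ
    have i2 : Integrable (fun s => cfc φ (A t) ⊗ₖ cfc ψ (A s)) μ :=
      (kantKronL (cfc φ (A t))).integrable_comp intΨ
    have i3 : Integrable (fun s => cfc ψ (A t) ⊗ₖ cfc φ (A s)) μ :=
      (kantKronL (cfc ψ (A t))).integrable_comp intΦ
    have i4 : Integrable (fun s => c • (cfc g (A t) ⊗ₖ cfc g (A s))) μ := i1.smul c
    have i5 : Integrable (fun s => ((1:ℂ)/2) • (cfc φ (A t) ⊗ₖ cfc ψ (A s)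
        + cfc ψ (A t) ⊗ₖ cfc φ (A s))) μ := (i2.add i3).smul ((1:ℂ)/2)
    rw [integral_sub i4 i5, integral_smul, integral_smul,
      integral_add i2 i3, ← kant_integral_kron_left intΓ, ← kant_integral_kron_left intΨ,
      ← kant_integral_kron_left intΦ]
  have j1 : Integrable (fun t => cfc g (A t) ⊗ₖ IΓ) μ :=
    (kantKronR IΓ).integrable_comp intΓ
  have j2 : Integrable (fun t => cfc φ (A t) ⊗ₖ IΨ) μ :=
    (kantKronR IΨ).integrable_comp intΦ
  have j3 : Integrable (fun t => cfc ψ (A t) ⊗ₖ IΦ) μ :=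
    (kantKronR IΦ).integrable_comp intΨ
  have j4 : Integrable (fun t => c • (cfc g (A t) ⊗ₖ IΓ)) μ := j1.smul c
  have j5 : Integrable (fun t => ((1:ℂ)/2) • (cfc φ (A t) ⊗ₖ IΨ + cfc ψ (A t) ⊗ₖ IΦ)) μ :=
    (j2.add j3).smul ((1:ℂ)/2)
  have jsub : Integrable (fun t => c • (cfc g (A t) ⊗ₖ IΓ)
      - ((1:ℂ)/2) • (cfc φ (A t) ⊗ₖ IΨ + cfc ψ (A t) ⊗ₖ IΦ)) μ := j4.sub j5
  have outer_eq : (∫ t, (c • (cfc g (A t) ⊗ₖ IΓ)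
      - ((1:ℂ)/2) • (cfc φ (A t) ⊗ₖ IΨ + cfc ψ (A t) ⊗ₖ IΦ)) ∂μ)
      = c • (IΓ ⊗ₖ IΓ) - ((1:ℂ)/2) • (IΦ ⊗ₖ IΨ + IΨ ⊗ₖ IΦ) := by
    rw [integral_sub j4 j5, integral_smul, integral_smul,
      integral_add j2 j3, ← kant_integral_kron_right intΓ, ← kant_integral_kron_right intΦ,
      ← kant_integral_kron_right intΨ]
  rw [← outer_eq]
  apply kant_integral_posSemidef jsub
  intro t
  rw [← inner_eq t]
  apply kant_integral_posSemidef
  · have i1 : Integrable (fun s => cfc g (A t) ⊗ₖ cfc g (A s)) μ :=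
      (kantKronL (cfc g (A t))).integrable_comp intΓ
    have i2 : Integrable (fun s => cfc φ (A t) ⊗ₖ cfc ψ (A s)) μ :=
      (kantKronL (cfc φ (A t))).integrable_comp intΨ
    have i3 : Integrable (fun s => cfc ψ (A t) ⊗ₖ cfc φ (A s)) μ :=
      (kantKronL (cfc ψ (A t))).integrable_comp intΦ
    have i4 : Integrable (fun s => c • (cfc g (A t) ⊗ₖ cfc g (A s))) μ := i1.smul c
    have i5 : Integrable (fun s => ((1:ℂ)/2) • (cfc φ (A t) ⊗ₖ cfc ψ (A s)
        + cfc ψ (A t) ⊗ₖ cfc φ (A s))) μ := (i2.add i3).smul ((1:ℂ)/2)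
    exact i4.sub i5
  · intro s
    exact hK_psd t s
end
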